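/- arXiv:0911.1564 — 8 statements merged into one kernel-verified Lean document; each statement's English description precedes it below -/
import Mathlib

section
/- For any vector x ∈ ℝⁿ with n ≥ 1, the ℓ₂-norm of x minus (1/√n) times the ℓ₁-norm of x is at most (√n/4) times the difference between the maximum and minimum absolute values of the coordinates of x; that is, ‖x‖₂ - ‖x‖₁/√n ≤ (√n/4)·(maxᵢ |xᵢ| - minᵢ |xᵢ|). -/
lemma l1_l2_aux (n : ℕ) (hn : 1 ≤ n) (x : Fin n → ℝ) (M m : ℝ)
    (hm0 : 0 ≤ m) (hmM : m ≤ M)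
    (hub : ∀ i, |x i| ≤ M) (hlb : ∀ i, m ≤ |x i|) :
    Real.sqrt (∑ i, (x i)^2) - (∑ i, |x i|) / Real.sqrt n ≤
      Real.sqrt n / 4 * (M - m) := by
  set S := ∑ i, |x i| with hSdef
  set s := Real.sqrt n with hsdef
  have hS0 : 0 ≤ S := Finset.sum_nonneg fun i _ => abs_nonneg _
  have hn0 : (0:ℝ) < n := by exact_mod_cast hn
  have hs : 0 < s := Real.sqrt_pos.mpr hn0
  have hs2 : s ^ 2 = n := Real.sq_sqrt hn0.le
  have hQ : ∑ i, (x i)^2 ≤ (M + m) * S - s ^ 2 * (m * M) := by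
    have h1 : ∑ i, (x i)^2 ≤ ∑ i, ((M + m) * |x i| - m * M) := by
      apply Finset.sum_le_sum
      intro i _
      have h := mul_nonneg (sub_nonneg.mpr (hlb i)) (sub_nonneg.mpr (hub i))
      have habs : (x i)^2 = |x i|^2 := (sq_abs _).symm
      nlinarith [h]
    have h2 : ∑ i, ((M + m) * |x i| - m * M) = (M + m) * S - (n : ℝ) * (m * M) := by
      rw [Finset.sum_sub_distrib, ← Finset.mul_sum, Finset.sum_const, Finset.card_univ,
        Fintype.card_fin, nsmul_eq_mul]
    rw [hs2]
    linarith [h1, h2.le]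
  have hT : S / s * s = S := div_mul_cancel₀ S hs.ne'
  set T := S / s with hTdef
  have key : ∑ i, (x i)^2 ≤ (T + s / 4 * (M - m))^2 := by
    rw [← hT] at hQ
    nlinarith [hQ, sq_nonneg (T - s * (M + 3*m) / 4),
      mul_nonneg (mul_nonneg (sq_nonneg s) hm0) (sub_nonneg.mpr hmM)]
  have hrhs0 : 0 ≤ T + s / 4 * (M - m) :=
    add_nonneg (div_nonneg hS0 hs.le)
      (mul_nonneg (div_nonneg hs.le (by norm_num)) (sub_nonneg.mpr hmM))
  have : Real.sqrt (∑ i, (x i)^2) ≤ T + s / 4 * (M - m) := by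
    calc Real.sqrt (∑ i, (x i)^2) ≤ Real.sqrt ((T + s / 4 * (M - m))^2) :=
          Real.sqrt_le_sqrt key
      _ = T + s / 4 * (M - m) := Real.sqrt_sq hrhs0
  linarith

theorem l1_l2_norm_inequality (n : ℕ) (hn : 1 ≤ n) (x : Fin n → ℝ) :
    Real.sqrt (∑ i, (x i)^2) - (∑ i, |x i|) / Real.sqrt n ≤
      Real.sqrt n / 4 *
        ((Finset.univ.sup' (Finset.univ_nonempty_iff.mpr ⟨⟨0, hn⟩⟩) fun i => |x i|) -
         (Finset.univ.inf' (Finset.univ_nonempty_iff.mpr ⟨⟨0, hn⟩⟩) fun i => |x i|)) := by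
  have hne : (Finset.univ : Finset (Fin n)).Nonempty := Finset.univ_nonempty_iff.mpr ⟨⟨0, hn⟩⟩
  have hub : ∀ i, |x i| ≤ Finset.univ.sup' hne fun i => |x i| :=
    fun i => Finset.le_sup' (fun i => |x i|) (Finset.mem_univ i)
  have hlb : ∀ i, (Finset.univ.inf' hne fun i => |x i|) ≤ |x i| :=
    fun i => Finset.inf'_le (fun i => |x i|) (Finset.mem_univ i)
  exact l1_l2_aux n hn x _ _
    (Finset.le_inf' hne _ fun i _ => abs_nonneg (x i))
    ((hlb ⟨0, hn⟩).trans (hub ⟨0, hn⟩)) hub hlb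
end

section
/- For any vector x ∈ ℝⁿ with n ≥ 1, ‖x‖₂ ≤ ‖x‖₁/√n + (√n/4)·‖x‖_∞. -/
theorem l2_le_l1_add_linf (n : ℕ) (hn : 1 ≤ n) (x : Fin n → ℝ) :
    Real.sqrt (∑ i, (x i)^2) ≤
      (∑ i, |x i|) / Real.sqrt n +
        Real.sqrt n / 4 *
          (Finset.univ.sup' (Finset.univ_nonempty_iff.mpr ⟨⟨0, hn⟩⟩) fun i => |x i|) := by
  set M := Finset.univ.sup' (Finset.univ_nonempty_iff.mpr ⟨⟨0, hn⟩⟩) fun i => |x i| with hMdef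
  set S := ∑ i, |x i| with hSdef
  have hM : ∀ i, |x i| ≤ M := fun i => Finset.le_sup' (fun j => |x j|) (Finset.mem_univ i)
  have hM0 : 0 ≤ M := le_trans (abs_nonneg _) (hM ⟨0, hn⟩)
  have hS0 : 0 ≤ S := Finset.sum_nonneg fun i _ => abs_nonneg _
  have h1 : ∑ i, (x i)^2 ≤ M * S := by
    rw [hSdef, Finset.mul_sum]
    refine Finset.sum_le_sum fun i _ => ?_
    calc (x i)^2 = |x i| * |x i| := by rw [← sq_abs]; ring
    _ ≤ M * |x i| := mul_le_mul_of_nonneg_right (hM i) (abs_nonneg _)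
  set t := Real.sqrt n with htdef
  have ht : 0 < t := Real.sqrt_pos.mpr (by exact_mod_cast Nat.pos_of_ne_zero (by omega))
  have ht2 : t^2 = n := Real.sq_sqrt (Nat.cast_nonneg n)
  have hRHS0 : 0 ≤ S / t + t / 4 * M := by positivity
  have h2 : M * S ≤ (S / t + t / 4 * M)^2 := by
    have key : 0 ≤ (S / t - t / 4 * M)^2 := sq_nonneg _
    have : (S / t + t / 4 * M)^2 - M * S = (S / t - t / 4 * M)^2 := by
      field_simp
      ring
    linarith
  calc Real.sqrt (∑ i, (x i)^2) ≤ Real.sqrt ((S / t + t / 4 * M)^2) :=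
        Real.sqrt_le_sqrt (le_trans h1 h2)
    _ = S / t + t / 4 * M := Real.sqrt_sq hRHS0
end

section
/- Let x₁ ≥ xₙ ≥ 0 be fixed real numbers. Define g(κ) = √(κ(x₁² - xₙ²) + n·xₙ²) - (κ/√n)(x₁ - xₙ) - √n·xₙ for κ ∈ (0, n). Then g attains its maximum over (0,n) at κ* = n·((x₁+xₙ)²/4 - xₙ²)/(x₁² - xₙ²) (assuming x₁ > xₙ), and g(κ) ≤ √n(x₁ - xₙ)·(1/2 - (x₁ + 3xₙ)/(4(x₁ + xₙ))) for all κ ∈ (0,n). -/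
theorem g_max (n : ℕ) (hn : 0 < n) (x1 xn : ℝ) (hx : xn < x1) (hxn : 0 ≤ xn)
    (g : ℝ → ℝ)
    (hg : ∀ κ : ℝ, g κ =
      Real.sqrt (κ * (x1^2 - xn^2) + n * xn^2) - κ / Real.sqrt n * (x1 - xn)
        - Real.sqrt n * xn) :
    (∀ κ ∈ Set.Ioo (0:ℝ) n,
        g κ ≤ g (n * (((x1 + xn) / 2)^2 - xn^2) / (x1^2 - xn^2))) ∧
    (∀ κ ∈ Set.Ioo (0:ℝ) n,
        g κ ≤ Real.sqrt n * (x1 - xn) * (1/2 - (x1 + 3*xn) / (4*(x1 + xn)))) := by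
  have hn' : (0:ℝ) < n := by exact_mod_cast hn
  set s := Real.sqrt n with hsdef
  have hs : 0 < s := Real.sqrt_pos.mpr hn'
  have hs2 : s^2 = n := Real.sq_sqrt hn'.le
  have hx1 : 0 < x1 := lt_of_le_of_lt hxn hx
  have hsum : 0 < x1 + xn := by linarith
  have ha : 0 < x1^2 - xn^2 := by nlinarith
  set c := s * (x1 + xn) / 2 with hc
  have hcpos : 0 < c := by positivity
  set K := (n:ℝ) * (((x1 + xn) / 2)^2 - xn^2) / (x1^2 - xn^2) with hK
  have hKa : K * (x1^2 - xn^2) + n * xn^2 = c^2 := by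
    rw [hK, hc, ← hs2]
    field_simp
    ring
  have hgK : g K = c - K / s * (x1 - xn) - s * xn := by
    rw [hg, hKa, Real.sqrt_sq hcpos.le]
  have main : ∀ κ ∈ Set.Ioo (0:ℝ) (n:ℝ), g κ ≤ g K := by
    intro κ hκ
    obtain ⟨hκ0, _⟩ := hκ
    have ht : 0 ≤ κ * (x1^2 - xn^2) + n * xn^2 := by positivity
    have hsq := Real.sq_sqrt ht
    have hnn := Real.sqrt_nonneg (κ * (x1^2 - xn^2) + n * xn^2)
    have hb : Real.sqrt (κ * (x1^2 - xn^2) + n * xn^2)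
        ≤ (κ * (x1^2 - xn^2) + n * xn^2 + c^2) / (2*c) := by
      rw [le_div_iff₀ (by positivity)]
      nlinarith [sq_nonneg (Real.sqrt (κ * (x1^2 - xn^2) + n * xn^2) - c)]
    have halg : (κ * (x1^2 - xn^2) + n * xn^2 + c^2) / (2*c) - κ / s * (x1 - xn)
        = c - K / s * (x1 - xn) := by
      rw [hc, hK, ← hs2]
      field_simp
      ring
    rw [hg, hgK]
    linarith
  refine ⟨main, fun κ hκ => ?_⟩
  have h1 := main κ hκ
  have heq : g K = s * (x1 - xn) * (1/2 - (x1 + 3*xn) / (4*(x1 + xn))) := by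
    rw [hgK, hK, hc, ← hs2]
    field_simp
    ring
  linarith
end

section
/- For any n×p matrix Φ and positive integers k, k' with k + k' ≤ p, θ_{k,k'}(Φ) ≤ δ_{k+k'}(Φ). -/
noncomputable def l2norm {p : ℕ} (c : Fin p → ℝ) : ℝ := Real.sqrt (∑ i, (c i)^2)

def IsSparse {p : ℕ} (k : ℕ) (c : Fin p → ℝ) : Prop :=
  (Finset.univ.filter (fun i => c i ≠ 0)).card ≤ k

/-- The restricted isometry constant `δ_k(Φ)`. -/
noncomputable def ripConst {n p : ℕ} (Φ : Matrix (Fin n) (Fin p) ℝ) (k : ℕ) : ℝ :=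
  sInf {δ : ℝ | 0 ≤ δ ∧ ∀ c : Fin p → ℝ, IsSparse k c →
    (1 - δ) * ∑ i, (c i)^2 ≤ (∑ i, (Φ.mulVec c i)^2) ∧
    (∑ i, (Φ.mulVec c i)^2) ≤ (1 + δ) * ∑ i, (c i)^2}

/-- The restricted orthogonality constant `θ_{k,k'}(Φ)`. -/
noncomputable def roConst {n p : ℕ} (Φ : Matrix (Fin n) (Fin p) ℝ) (k k' : ℕ) : ℝ :=
  sInf {θ : ℝ | 0 ≤ θ ∧ ∀ c c' : Fin p → ℝ, IsSparse k c → IsSparse k' c' →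
    (∀ i, c i = 0 ∨ c' i = 0) →
    |∑ i, (Φ.mulVec c i) * (Φ.mulVec c' i)| ≤ θ * l2norm c * l2norm c'}

/-- If the support of `z` is contained in the union of supports of a `k`-sparse and a
`k'`-sparse vector, then `z` is `(k+k')`-sparse. -/
lemma sparse_union {p k k' : ℕ} {c c' z : Fin p → ℝ}
    (hc : IsSparse k c) (hc' : IsSparse k' c')
    (h : ∀ i, z i ≠ 0 → c i ≠ 0 ∨ c' i ≠ 0) : IsSparse (k + k') z := by
  unfold IsSparse at *
  calc (Finset.univ.filter (fun i => z i ≠ 0)).card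
      ≤ ((Finset.univ.filter (fun i => c i ≠ 0)) ∪
         (Finset.univ.filter (fun i => c' i ≠ 0))).card := by
        apply Finset.card_le_card
        intro i hi
        simp only [Finset.mem_filter, Finset.mem_union, Finset.mem_univ, true_and] at *
        exact h i hi
    _ ≤ (Finset.univ.filter (fun i => c i ≠ 0)).card +
        (Finset.univ.filter (fun i => c' i ≠ 0)).card := Finset.card_union_le _ _
    _ ≤ k + k' := Nat.add_le_add hc hc'

/-- Key polarization bound. -/
lemma key_bound {n p : ℕ} (Φ : Matrix (Fin n) (Fin p) ℝ) {K : ℕ} (δ : ℝ)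
    (hδ2 : ∀ c : Fin p → ℝ, IsSparse K c →
      (1 - δ) * ∑ i, (c i)^2 ≤ (∑ i, (Φ.mulVec c i)^2) ∧
      (∑ i, (Φ.mulVec c i)^2) ≤ (1 + δ) * ∑ i, (c i)^2)
    (c c' : Fin p → ℝ) (h1 : IsSparse K (c + c')) (h2 : IsSparse K (c - c'))
    (hcs : ∑ i, c i * c' i = 0) :
    ∑ i, Φ.mulVec c i * Φ.mulVec c' i ≤ δ * (∑ i, (c i)^2 + ∑ i, (c' i)^2) / 2 := by
  have had : Φ.mulVec (c + c') = fun i => Φ.mulVec c i + Φ.mulVec c' i := by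
    rw [Matrix.mulVec_add]; rfl
  have hsu : Φ.mulVec (c - c') = fun i => Φ.mulVec c i - Φ.mulVec c' i := by
    rw [Matrix.mulVec_sub]; rfl
  have hS1 : ∑ i, ((c + c') i)^2 = (∑ i, (c i)^2 + ∑ i, (c' i)^2) := by
    have : ∀ i ∈ Finset.univ, ((c + c') i)^2 = (c i)^2 + (c' i)^2 + 2 * (c i * c' i) := by
      intro i _; simp [Pi.add_apply]; ring
    rw [Finset.sum_congr rfl this]
    simp [Finset.sum_add_distrib, hcs, ← Finset.mul_sum]
  have hS2 : ∑ i, ((c - c') i)^2 = (∑ i, (c i)^2 + ∑ i, (c' i)^2) := by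
    have : ∀ i ∈ Finset.univ, ((c - c') i)^2 = (c i)^2 + (c' i)^2 - 2 * (c i * c' i) := by
      intro i _; simp [Pi.sub_apply]; ring
    rw [Finset.sum_congr rfl this]
    simp [Finset.sum_add_distrib, Finset.sum_sub_distrib, hcs, ← Finset.mul_sum]
  have hQ1 : ∑ i, (Φ.mulVec (c + c') i)^2
      = ∑ i, (Φ.mulVec c i)^2 + ∑ i, (Φ.mulVec c' i)^2
        + 2 * ∑ i, Φ.mulVec c i * Φ.mulVec c' i := by
    rw [had]
    simp only [add_sq]
    rw [Finset.sum_add_distrib, Finset.sum_add_distrib, Finset.mul_sum]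
    ring_nf
  have hQ2 : ∑ i, (Φ.mulVec (c - c') i)^2
      = ∑ i, (Φ.mulVec c i)^2 + ∑ i, (Φ.mulVec c' i)^2
        - 2 * ∑ i, Φ.mulVec c i * Φ.mulVec c' i := by
    rw [hsu]
    simp only [sub_sq]
    rw [Finset.sum_add_distrib, Finset.sum_sub_distrib, Finset.mul_sum]
    ring_nf
  have hb1 := (hδ2 (c + c') h1).2
  have hb2 := (hδ2 (c - c') h2).1
  rw [hQ1, hS1] at hb1
  rw [hQ2, hS2] at hb2
  linarith

theorem roConst_le_ripConst (n p k k' : ℕ) (Φ : Matrix (Fin n) (Fin p) ℝ)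
    (hk : 0 < k) (hk' : 0 < k') (hp : k + k' ≤ p) :
    roConst Φ k k' ≤ ripConst Φ (k + k') := by
  -- The RIP set is nonempty
  have hRIPne : ({δ : ℝ | 0 ≤ δ ∧ ∀ c : Fin p → ℝ, IsSparse (k + k') c →
      (1 - δ) * ∑ i, (c i)^2 ≤ (∑ i, (Φ.mulVec c i)^2) ∧
      (∑ i, (Φ.mulVec c i)^2) ≤ (1 + δ) * ∑ i, (c i)^2}).Nonempty := by
    refine ⟨1 + ∑ i, ∑ j, (Φ i j)^2, ?_, ?_⟩
    · positivity
    · intro c _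
      have hcnn : (0:ℝ) ≤ ∑ i, (c i)^2 := Finset.sum_nonneg fun i _ => sq_nonneg _
      constructor
      · have : (1 - (1 + ∑ i, ∑ j, (Φ i j)^2)) ≤ 0 := by
          have : (0:ℝ) ≤ ∑ i, ∑ j, (Φ i j)^2 := by positivity
          linarith
        have h1 : (1 - (1 + ∑ i, ∑ j, (Φ i j)^2)) * ∑ i, (c i)^2 ≤ 0 :=
          mul_nonpos_of_nonpos_of_nonneg this hcnn
        have h2 : (0:ℝ) ≤ ∑ i, (Φ.mulVec c i)^2 :=
          Finset.sum_nonneg fun i _ => sq_nonneg _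
        linarith
      · have hCS : ∀ i, (Φ.mulVec c i)^2 ≤ (∑ j, (Φ i j)^2) * ∑ j, (c j)^2 := by
          intro i
          have := Finset.sum_mul_sq_le_sq_mul_sq Finset.univ (fun j => Φ i j) c
          simpa [Matrix.mulVec, dotProduct] using this
        calc ∑ i, (Φ.mulVec c i)^2 ≤ ∑ i, (∑ j, (Φ i j)^2) * ∑ j, (c j)^2 :=
              Finset.sum_le_sum fun i _ => hCS i
          _ = (∑ i, ∑ j, (Φ i j)^2) * ∑ j, (c j)^2 := by rw [Finset.sum_mul]
          _ ≤ (1 + (1 + ∑ i, ∑ j, (Φ i j)^2)) * ∑ j, (c j)^2 := by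
              apply mul_le_mul_of_nonneg_right _ hcnn
              linarith
  rw [roConst, ripConst]
  apply le_csInf hRIPne
  intro δ hδ
  obtain ⟨hδ0, hδ2⟩ := hδ
  apply csInf_le ⟨0, fun θ hθ => hθ.1⟩
  refine ⟨hδ0, ?_⟩
  intro c c' hc hc' hdisj
  set S := ∑ i, (c i)^2 with hS
  set S' := ∑ i, (c' i)^2 with hS'
  have hSnn : 0 ≤ S := Finset.sum_nonneg fun i _ => sq_nonneg _
  have hS'nn : 0 ≤ S' := Finset.sum_nonneg fun i _ => sq_nonneg _
  have hnc : l2norm c ^ 2 = S := Real.sq_sqrt hSnn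
  have hnc' : l2norm c' ^ 2 = S' := Real.sq_sqrt hS'nn
  -- zero cases
  by_cases hc0 : S = 0
  · have : c = 0 := by
      funext i
      have := (Finset.sum_eq_zero_iff_of_nonneg (fun i _ => sq_nonneg (c i))).1 hc0 i
        (Finset.mem_univ i)
      exact pow_eq_zero_iff (n := 2) (by norm_num) |>.1 this
    simp [this, Matrix.mulVec_zero, l2norm]
  by_cases hc'0 : S' = 0
  · have : c' = 0 := by
      funext i
      have := (Finset.sum_eq_zero_iff_of_nonneg (fun i _ => sq_nonneg (c' i))).1 hc'0 i
        (Finset.mem_univ i)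
      exact pow_eq_zero_iff (n := 2) (by norm_num) |>.1 this
    simp [this, Matrix.mulVec_zero, l2norm]
  have hSpos : 0 < S := lt_of_le_of_ne hSnn (Ne.symm hc0)
  have hS'pos : 0 < S' := lt_of_le_of_ne hS'nn (Ne.symm hc'0)
  have hncpos : 0 < l2norm c := Real.sqrt_pos.2 hSpos
  have hnc'pos : 0 < l2norm c' := Real.sqrt_pos.2 hS'pos
  set a := l2norm c with ha
  set b := l2norm c' with hb
  -- cross-scaled vectors x = b • c, y = ± a • c'
  have key : ∀ (y : Fin p → ℝ), IsSparse k' y → (∀ i, c i = 0 ∨ y i = 0) →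
      (∑ i, (y i)^2 = S') →
      ∑ i, Φ.mulVec (b • c) i * Φ.mulVec ((a : ℝ) • y) i ≤ δ * (S * S') := by
    intro y hy hdy hyS
    have hx : IsSparse k (b • c) := by
      refine le_trans (Finset.card_le_card ?_) hc
      intro i hi
      simp only [Finset.mem_filter, Finset.mem_univ, true_and, Pi.smul_apply,
        smul_eq_mul] at *
      intro h; apply hi; rw [h, mul_zero]
    have hy2 : IsSparse k' ((a : ℝ) • y) := by
      refine le_trans (Finset.card_le_card ?_) hy
      intro i hi
      simp only [Finset.mem_filter, Finset.mem_univ, true_and, Pi.smul_apply,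
        smul_eq_mul] at *
      intro h; apply hi; rw [h, mul_zero]
    have h1 : IsSparse (k + k') (b • c + a • y) := by
      apply sparse_union hx hy2
      intro i hi
      by_contra hcon
      push_neg at hcon
      apply hi
      simp [hcon.1, hcon.2]
    have h2 : IsSparse (k + k') (b • c - a • y) := by
      apply sparse_union hx hy2
      intro i hi
      by_contra hcon
      push_neg at hcon
      apply hi
      simp [hcon.1, hcon.2]
    have hcs : ∑ i, (b • c) i * ((a : ℝ) • y) i = 0 := by
      apply Finset.sum_eq_zero
      intro i _
      rcases hdy i with h | h <;> simp [h]
    have hsum : ∑ i, ((b • c) i)^2 + ∑ i, (((a : ℝ) • y) i)^2 = 2 * (S * S') := by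
      have e1 : ∑ i, ((b • c) i)^2 = b^2 * S := by
        simp [mul_pow, Finset.mul_sum, hS]
      have e2 : ∑ i, (((a : ℝ) • y) i)^2 = a^2 * S' := by
        rw [← hyS]
        simp [mul_pow, Finset.mul_sum]
      rw [e1, e2, hnc, hnc']
      ring
    have := key_bound Φ δ hδ2 (b • c) ((a : ℝ) • y) h1 h2 hcs
    rw [hsum] at this
    linarith
  -- apply key to y = c' and y = -c'
  have hup := key c' hc' hdisj rfl
  have hdown := key (-c') (by
      refine le_trans (Finset.card_le_card ?_) hc'
      intro i hi
      simp only [Finset.mem_filter, Finset.mem_univ, true_and, Pi.neg_apply] at *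
      intro h; apply hi; rw [h, neg_zero])
    (fun i => by rcases hdisj i with h | h
                 · exact Or.inl h
                 · exact Or.inr (by simp [h]))
    (by simp [hS'])
  have hmul : ∀ (y : Fin p → ℝ),
      ∑ i, Φ.mulVec (b • c) i * Φ.mulVec ((a : ℝ) • y) i
        = a * b * ∑ i, Φ.mulVec c i * Φ.mulVec y i := by
    intro y
    rw [Matrix.mulVec_smul, Matrix.mulVec_smul, Finset.mul_sum]
    apply Finset.sum_congr rfl
    intro i _
    simp [smul_eq_mul]
    ring
  rw [hmul] at hup hdown
  have hneg : ∑ i, Φ.mulVec c i * Φ.mulVec (-c') i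
      = -∑ i, Φ.mulVec c i * Φ.mulVec c' i := by
    rw [← Finset.sum_neg_distrib]
    apply Finset.sum_congr rfl
    intro i _
    rw [Matrix.mulVec_neg]
    simp
  rw [hneg] at hdown
  have habpos : 0 < a * b := mul_pos hncpos hnc'pos
  have hSS : S * S' = (a * b) * (a * b) := by
    rw [← hnc, ← hnc']; ring
  rw [abs_le]
  constructor
  · nlinarith [hdown, hSS, habpos]
  · nlinarith [hup, hSS, habpos]
end

section
/- For any n×p matrix Φ and positive integers k, k' with k + k' ≤ p, δ_{k+k'}(Φ) ≤ θ_{k,k'}(Φ) + max(δ_k(Φ), δ_{k'}(Φ)). -/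
lemma opBound {n p : ℕ} (Φ : Matrix (Fin n) (Fin p) ℝ) (c : Fin p → ℝ) :
    ∑ i, (Φ.mulVec c i)^2 ≤ (∑ i, ∑ j, (Φ i j)^2) * ∑ j, (c j)^2 := by
  rw [Finset.sum_mul]
  apply Finset.sum_le_sum
  intro i _
  simpa [Matrix.mulVec, dotProduct] using
    Finset.sum_mul_sq_le_sq_mul_sq Finset.univ (fun j => Φ i j) c

lemma ripConst_mem {n p : ℕ} (Φ : Matrix (Fin n) (Fin p) ℝ) (k : ℕ) :
    0 ≤ ripConst Φ k ∧ ∀ c : Fin p → ℝ, IsSparse k c →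
      (1 - ripConst Φ k) * ∑ i, (c i)^2 ≤ (∑ i, (Φ.mulVec c i)^2) ∧
      (∑ i, (Φ.mulVec c i)^2) ≤ (1 + ripConst Φ k) * ∑ i, (c i)^2 := by
  set C : ℝ := ∑ i, ∑ j, (Φ i j)^2 with hCdef
  have hC : 0 ≤ C := by positivity
  have hclosed : IsClosed {δ : ℝ | 0 ≤ δ ∧ ∀ c : Fin p → ℝ, IsSparse k c →
      (1 - δ) * ∑ i, (c i)^2 ≤ (∑ i, (Φ.mulVec c i)^2) ∧
      (∑ i, (Φ.mulVec c i)^2) ≤ (1 + δ) * ∑ i, (c i)^2} := by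
    have heq : {δ : ℝ | 0 ≤ δ ∧ ∀ c : Fin p → ℝ, IsSparse k c →
        (1 - δ) * ∑ i, (c i)^2 ≤ (∑ i, (Φ.mulVec c i)^2) ∧
        (∑ i, (Φ.mulVec c i)^2) ≤ (1 + δ) * ∑ i, (c i)^2}
        = Set.Ici (0:ℝ) ∩ ⋂ c : Fin p → ℝ, {δ : ℝ | IsSparse k c →
        (1 - δ) * ∑ i, (c i)^2 ≤ (∑ i, (Φ.mulVec c i)^2) ∧
        (∑ i, (Φ.mulVec c i)^2) ≤ (1 + δ) * ∑ i, (c i)^2} := by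
      ext δ; simp [Set.mem_iInter, Set.mem_Ici]
    rw [heq]
    refine isClosed_Ici.inter (isClosed_iInter fun c => ?_)
    by_cases hc : IsSparse k c
    · simp only [hc, true_implies]
      rw [Set.setOf_and]
      exact (isClosed_le (by continuity) continuous_const).inter
        (isClosed_le continuous_const (by continuity))
    · simp [hc]
  have hne : (C + 1) ∈ {δ : ℝ | 0 ≤ δ ∧ ∀ c : Fin p → ℝ, IsSparse k c →
      (1 - δ) * ∑ i, (c i)^2 ≤ (∑ i, (Φ.mulVec c i)^2) ∧
      (∑ i, (Φ.mulVec c i)^2) ≤ (1 + δ) * ∑ i, (c i)^2} := by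
    refine ⟨by linarith, fun c _ => ⟨?_, ?_⟩⟩
    · have h1 : (0:ℝ) ≤ ∑ i, (Φ.mulVec c i)^2 := by positivity
      have h2 : (0:ℝ) ≤ ∑ i, (c i)^2 := by positivity
      nlinarith
    · have h2 : (0:ℝ) ≤ ∑ i, (c i)^2 := by positivity
      nlinarith [opBound Φ c]
  have hbdd : BddBelow {δ : ℝ | 0 ≤ δ ∧ ∀ c : Fin p → ℝ, IsSparse k c →
      (1 - δ) * ∑ i, (c i)^2 ≤ (∑ i, (Φ.mulVec c i)^2) ∧
      (∑ i, (Φ.mulVec c i)^2) ≤ (1 + δ) * ∑ i, (c i)^2} := ⟨0, fun x hx => hx.1⟩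
  exact hclosed.csInf_mem ⟨_, hne⟩ hbdd

lemma roConst_mem {n p : ℕ} (Φ : Matrix (Fin n) (Fin p) ℝ) (k k' : ℕ) :
    0 ≤ roConst Φ k k' ∧ ∀ c c' : Fin p → ℝ, IsSparse k c → IsSparse k' c' →
      (∀ i, c i = 0 ∨ c' i = 0) →
      |∑ i, (Φ.mulVec c i) * (Φ.mulVec c' i)| ≤ roConst Φ k k' * l2norm c * l2norm c' := by
  set C : ℝ := ∑ i, ∑ j, (Φ i j)^2 with hCdef
  have hC : 0 ≤ C := by positivity
  have hclosed : IsClosed {θ : ℝ | 0 ≤ θ ∧ ∀ c c' : Fin p → ℝ, IsSparse k c → IsSparse k' c' →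
      (∀ i, c i = 0 ∨ c' i = 0) →
      |∑ i, (Φ.mulVec c i) * (Φ.mulVec c' i)| ≤ θ * l2norm c * l2norm c'} := by
    have heq : {θ : ℝ | 0 ≤ θ ∧ ∀ c c' : Fin p → ℝ, IsSparse k c → IsSparse k' c' →
        (∀ i, c i = 0 ∨ c' i = 0) →
        |∑ i, (Φ.mulVec c i) * (Φ.mulVec c' i)| ≤ θ * l2norm c * l2norm c'}
        = Set.Ici (0:ℝ) ∩ ⋂ c : Fin p → ℝ, ⋂ c' : Fin p → ℝ, {θ : ℝ |
        IsSparse k c → IsSparse k' c' → (∀ i, c i = 0 ∨ c' i = 0) →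
        |∑ i, (Φ.mulVec c i) * (Φ.mulVec c' i)| ≤ θ * l2norm c * l2norm c'} := by
      ext θ; simp [Set.mem_iInter, Set.mem_Ici]
    rw [heq]
    refine isClosed_Ici.inter (isClosed_iInter fun c => isClosed_iInter fun c' => ?_)
    by_cases h1 : IsSparse k c
    · by_cases h2 : IsSparse k' c'
      · by_cases h3 : ∀ i, c i = 0 ∨ c' i = 0
        · simp only [h1, h2, true_implies]
          have : {θ : ℝ | (∀ i, c i = 0 ∨ c' i = 0) →
              |∑ i, (Φ.mulVec c i) * (Φ.mulVec c' i)| ≤ θ * l2norm c * l2norm c'}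
              = {θ : ℝ | |∑ i, (Φ.mulVec c i) * (Φ.mulVec c' i)| ≤ θ * l2norm c * l2norm c'} := by
            ext θ; simp [h3]
          rw [this]
          exact isClosed_le continuous_const (by continuity)
        · have : {θ : ℝ | IsSparse k c → IsSparse k' c' → (∀ i, c i = 0 ∨ c' i = 0) →
              |∑ i, (Φ.mulVec c i) * (Φ.mulVec c' i)| ≤ θ * l2norm c * l2norm c'} = Set.univ := by
            ext θ; simp only [Set.mem_setOf_eq, Set.mem_univ, iff_true]
            intro _ _ h; exact absurd h h3
          rw [this]; exact isClosed_univ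
      · have : {θ : ℝ | IsSparse k c → IsSparse k' c' → (∀ i, c i = 0 ∨ c' i = 0) →
            |∑ i, (Φ.mulVec c i) * (Φ.mulVec c' i)| ≤ θ * l2norm c * l2norm c'} = Set.univ := by
          ext θ; simp [h2]
        rw [this]; exact isClosed_univ
    · have : {θ : ℝ | IsSparse k c → IsSparse k' c' → (∀ i, c i = 0 ∨ c' i = 0) →
          |∑ i, (Φ.mulVec c i) * (Φ.mulVec c' i)| ≤ θ * l2norm c * l2norm c'} = Set.univ := by
        ext θ; simp [h1]
      rw [this]; exact isClosed_univ
  have hne : C ∈ {θ : ℝ | 0 ≤ θ ∧ ∀ c c' : Fin p → ℝ, IsSparse k c → IsSparse k' c' →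
      (∀ i, c i = 0 ∨ c' i = 0) →
      |∑ i, (Φ.mulVec c i) * (Φ.mulVec c' i)| ≤ θ * l2norm c * l2norm c'} := by
    refine ⟨hC, fun c c' _ _ _ => ?_⟩
    have hA : (0:ℝ) ≤ ∑ i, (Φ.mulVec c i)^2 := by positivity
    have hB : (0:ℝ) ≤ ∑ i, (Φ.mulVec c' i)^2 := by positivity
    have habs : |∑ i, (Φ.mulVec c i) * (Φ.mulVec c' i)|
        ≤ Real.sqrt ((∑ i, (Φ.mulVec c i)^2) * ∑ i, (Φ.mulVec c' i)^2) := by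
      rw [← Real.sqrt_sq_eq_abs]
      exact Real.sqrt_le_sqrt (Finset.sum_mul_sq_le_sq_mul_sq _ _ _)
    have h1 : Real.sqrt (∑ i, (Φ.mulVec c i)^2) ≤ Real.sqrt C * l2norm c := by
      rw [l2norm, ← Real.sqrt_mul hC]
      exact Real.sqrt_le_sqrt (opBound Φ c)
    have h2 : Real.sqrt (∑ i, (Φ.mulVec c' i)^2) ≤ Real.sqrt C * l2norm c' := by
      rw [l2norm, ← Real.sqrt_mul hC]
      exact Real.sqrt_le_sqrt (opBound Φ c')
    calc |∑ i, (Φ.mulVec c i) * (Φ.mulVec c' i)|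
        ≤ Real.sqrt (∑ i, (Φ.mulVec c i)^2) * Real.sqrt (∑ i, (Φ.mulVec c' i)^2) := by
          rw [← Real.sqrt_mul hA]; exact habs
      _ ≤ (Real.sqrt C * l2norm c) * (Real.sqrt C * l2norm c') := by
          apply mul_le_mul h1 h2 (Real.sqrt_nonneg _)
          exact mul_nonneg (Real.sqrt_nonneg _) (Real.sqrt_nonneg _)
      _ = (Real.sqrt C * Real.sqrt C) * l2norm c * l2norm c' := by ring
      _ = C * l2norm c * l2norm c' := by rw [Real.mul_self_sqrt hC]
  have hbdd : BddBelow {θ : ℝ | 0 ≤ θ ∧ ∀ c c' : Fin p → ℝ, IsSparse k c → IsSparse k' c' →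
      (∀ i, c i = 0 ∨ c' i = 0) →
      |∑ i, (Φ.mulVec c i) * (Φ.mulVec c' i)| ≤ θ * l2norm c * l2norm c'} :=
    ⟨0, fun x hx => hx.1⟩
  exact hclosed.csInf_mem ⟨_, hne⟩ hbdd

theorem ripConst_le_roConst_add_max (n p k k' : ℕ) (Φ : Matrix (Fin n) (Fin p) ℝ)
    (hk : 0 < k) (hk' : 0 < k') (hp : k + k' ≤ p) :
    ripConst Φ (k + k') ≤ roConst Φ k k' + max (ripConst Φ k) (ripConst Φ k') := by
  obtain ⟨hθ0, hθ⟩ := roConst_mem Φ k k'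
  obtain ⟨hd1_0, hd1⟩ := ripConst_mem Φ k
  obtain ⟨hd2_0, hd2⟩ := ripConst_mem Φ k'
  set θ := roConst Φ k k' with hθdef
  set M := max (ripConst Φ k) (ripConst Φ k') with hMdef
  have hM0 : 0 ≤ M := le_trans hd1_0 (le_max_left _ _)
  have hM1 : ripConst Φ k ≤ M := le_max_left _ _
  have hM2 : ripConst Φ k' ≤ M := le_max_right _ _
  apply csInf_le ⟨0, fun x hx => hx.1⟩
  refine ⟨by linarith, fun c hc => ?_⟩
  classical
  set S : Finset (Fin p) := Finset.univ.filter (fun i => c i ≠ 0) with hSdef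
  have hScard : S.card ≤ k + k' := hc
  obtain ⟨T, hTS, hTcard⟩ := Finset.exists_subset_card_eq (s := S) (n := min k S.card) (min_le_right _ _)
  set c1 : Fin p → ℝ := fun i => if i ∈ T then c i else 0 with hc1def
  set c2 : Fin p → ℝ := fun i => if i ∈ S \ T then c i else 0 with hc2def
  have hsum : ∀ i, c i = c1 i + c2 i := by
    intro i
    have e1 : c1 i = if i ∈ T then c i else 0 := rfl
    have e2 : c2 i = if i ∈ S \ T then c i else 0 := rfl
    rw [e1, e2]
    by_cases h1 : i ∈ T
    · rw [if_pos h1, if_neg (fun h => (Finset.mem_sdiff.mp h).2 h1)]; ring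
    · rw [if_neg h1]
      by_cases h2 : i ∈ S
      · rw [if_pos (Finset.mem_sdiff.mpr ⟨h2, h1⟩)]; ring
      · have hz : c i = 0 := by
          by_contra h
          exact h2 (Finset.mem_filter.mpr ⟨Finset.mem_univ i, h⟩)
        rw [if_neg (fun h => h2 (Finset.mem_sdiff.mp h).1), hz]; ring
  have hdisj : ∀ i, c1 i = 0 ∨ c2 i = 0 := by
    intro i
    by_cases h1 : i ∈ T
    · right
      exact if_neg (fun h => (Finset.mem_sdiff.mp h).2 h1)
    · left
      exact if_neg h1
  have hc1s : IsSparse k c1 := by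
    unfold IsSparse
    have hsub : Finset.univ.filter (fun i => c1 i ≠ 0) ⊆ T := by
      intro i hi
      by_contra h
      exact (Finset.mem_filter.mp hi).2 (if_neg h)
    calc (Finset.univ.filter (fun i => c1 i ≠ 0)).card ≤ T.card := Finset.card_le_card hsub
      _ = min k S.card := hTcard
      _ ≤ k := min_le_left _ _
  have hc2s : IsSparse k' c2 := by
    unfold IsSparse
    have hsub : Finset.univ.filter (fun i => c2 i ≠ 0) ⊆ S \ T := by
      intro i hi
      by_contra h
      exact (Finset.mem_filter.mp hi).2 (if_neg h)
    have hcard : (S \ T).card = S.card - T.card := Finset.card_sdiff_of_subset hTS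
    calc (Finset.univ.filter (fun i => c2 i ≠ 0)).card ≤ (S \ T).card := Finset.card_le_card hsub
      _ ≤ k' := by omega
  set A : ℝ := ∑ i, (c1 i)^2 with hAdef
  set B : ℝ := ∑ i, (c2 i)^2 with hBdef
  have hA0 : 0 ≤ A := by positivity
  have hB0 : 0 ≤ B := by positivity
  have hAB : ∑ i, (c i)^2 = A + B := by
    rw [hAdef, hBdef, ← Finset.sum_add_distrib]
    apply Finset.sum_congr rfl
    intro i _
    rw [hsum i]
    rcases hdisj i with h | h <;> rw [h] <;> ring
  have hceq : c = c1 + c2 := funext hsum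
  have hΦ : Φ.mulVec c = Φ.mulVec c1 + Φ.mulVec c2 := by rw [hceq, Matrix.mulVec_add]
  have hexp : ∑ i, (Φ.mulVec c i)^2
      = (∑ i, (Φ.mulVec c1 i)^2) + (∑ i, (Φ.mulVec c2 i)^2)
        + 2 * ∑ i, (Φ.mulVec c1 i) * (Φ.mulVec c2 i) := by
    rw [hΦ]
    simp only [Pi.add_apply]
    rw [Finset.mul_sum, ← Finset.sum_add_distrib, ← Finset.sum_add_distrib]
    apply Finset.sum_congr rfl
    intro i _
    ring
  obtain ⟨hlo1, hhi1⟩ := hd1 c1 hc1s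
  obtain ⟨hlo2, hhi2⟩ := hd2 c2 hc2s
  have hcross := hθ c1 c2 hc1s hc2s hdisj
  have hl1 : l2norm c1 = Real.sqrt A := rfl
  have hl2 : l2norm c2 = Real.sqrt B := rfl
  rw [hl1, hl2] at hcross
  obtain ⟨hcl, hcr⟩ := abs_le.mp hcross
  have hsa : Real.sqrt A ^ 2 = A := Real.sq_sqrt hA0
  have hsb : Real.sqrt B ^ 2 = B := Real.sq_sqrt hB0
  have h2ab : 2 * (Real.sqrt A * Real.sqrt B) ≤ A + B := by
    nlinarith [sq_nonneg (Real.sqrt A - Real.sqrt B)]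
  have hcb : θ * (2 * (Real.sqrt A * Real.sqrt B)) ≤ θ * (A + B) :=
    mul_le_mul_of_nonneg_left h2ab hθ0
  have hM1A : ripConst Φ k * A ≤ M * A := mul_le_mul_of_nonneg_right hM1 hA0
  have hM2B : ripConst Φ k' * B ≤ M * B := mul_le_mul_of_nonneg_right hM2 hB0
  constructor
  · rw [hAB, hexp]
    linarith [hlo1, hlo2, hcl, hcb, hM1A, hM2B]
  · rw [hAB, hexp]
    linarith [hhi1, hhi2, hcr, hcb, hM1A, hM2B]
end

section
/- For any n×p matrix Φ and positive integers k, k' with k + k' ≤ p, δ_{k+k'}(Φ) ≤ θ_{k,k'}(Φ) + (k·δ_k(Φ) + k'·δ_{k'}(Φ))/(k + k'). -/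
section helpers
variable {n p : ℕ} (Φ : Matrix (Fin n) (Fin p) ℝ)

lemma sum_sq_mulVec_le (c : Fin p → ℝ) :
    ∑ i, (Φ.mulVec c i)^2 ≤ (∑ i, ∑ j, (Φ i j)^2) * ∑ j, (c j)^2 := by
  rw [Finset.sum_mul]
  apply Finset.sum_le_sum
  intro i _
  have h := Finset.sum_mul_sq_le_sq_mul_sq Finset.univ (fun j => Φ i j) c
  simpa [Matrix.mulVec, dotProduct] using h

lemma ripSet_nonempty (k : ℕ) :
    {δ : ℝ | 0 ≤ δ ∧ ∀ c : Fin p → ℝ, IsSparse k c →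
      (1 - δ) * ∑ i, (c i)^2 ≤ (∑ i, (Φ.mulVec c i)^2) ∧
      (∑ i, (Φ.mulVec c i)^2) ≤ (1 + δ) * ∑ i, (c i)^2}.Nonempty := by
  set M : ℝ := ∑ i, ∑ j, (Φ i j)^2 with hM
  have hM0 : 0 ≤ M := Finset.sum_nonneg fun i _ => Finset.sum_nonneg fun j _ => sq_nonneg _
  refine ⟨1 + M, by linarith, fun c _ => ⟨?_, ?_⟩⟩
  · have h1 : (0:ℝ) ≤ ∑ i, (Φ.mulVec c i)^2 := Finset.sum_nonneg fun i _ => sq_nonneg _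
    have h2 : (0:ℝ) ≤ ∑ i, (c i)^2 := Finset.sum_nonneg fun i _ => sq_nonneg _
    nlinarith
  · have h := sum_sq_mulVec_le Φ c
    have h2 : (0:ℝ) ≤ ∑ i, (c i)^2 := Finset.sum_nonneg fun i _ => sq_nonneg _
    nlinarith

lemma abs_sum_mul_le (f g : Fin n → ℝ) :
    |∑ i, f i * g i| ≤ Real.sqrt (∑ i, (f i)^2) * Real.sqrt (∑ i, (g i)^2) := by
  have h := Finset.sum_mul_sq_le_sq_mul_sq Finset.univ f g
  have := Real.sqrt_le_sqrt h
  rwa [Real.sqrt_sq_eq_abs, Real.sqrt_mul (Finset.sum_nonneg fun i _ => sq_nonneg _)] at this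

lemma roSet_nonempty (k k' : ℕ) :
    {θ : ℝ | 0 ≤ θ ∧ ∀ c c' : Fin p → ℝ, IsSparse k c → IsSparse k' c' →
      (∀ i, c i = 0 ∨ c' i = 0) →
      |∑ i, (Φ.mulVec c i) * (Φ.mulVec c' i)| ≤ θ * l2norm c * l2norm c'}.Nonempty := by
  set M : ℝ := ∑ i, ∑ j, (Φ i j)^2 with hM
  have hM0 : 0 ≤ M := Finset.sum_nonneg fun i _ => Finset.sum_nonneg fun j _ => sq_nonneg _
  refine ⟨1 + M, by linarith, fun c c' _ _ _ => ?_⟩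
  have h := abs_sum_mul_le (Φ.mulVec c) (Φ.mulVec c')
  have h1 : Real.sqrt (∑ i, (Φ.mulVec c i)^2) ≤ Real.sqrt M * l2norm c := by
    rw [l2norm, ← Real.sqrt_mul hM0]
    exact Real.sqrt_le_sqrt (sum_sq_mulVec_le Φ c)
  have h2 : Real.sqrt (∑ i, (Φ.mulVec c' i)^2) ≤ Real.sqrt M * l2norm c' := by
    rw [l2norm, ← Real.sqrt_mul hM0]
    exact Real.sqrt_le_sqrt (sum_sq_mulVec_le Φ c')
  have hc : 0 ≤ l2norm c := Real.sqrt_nonneg _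
  have hc' : 0 ≤ l2norm c' := Real.sqrt_nonneg _
  have hs0 : 0 ≤ Real.sqrt (∑ i, (Φ.mulVec c i)^2) := Real.sqrt_nonneg _
  have hs0' : 0 ≤ Real.sqrt (∑ i, (Φ.mulVec c' i)^2) := Real.sqrt_nonneg _
  have hMs : Real.sqrt M * Real.sqrt M = M := Real.mul_self_sqrt hM0
  calc |∑ i, (Φ.mulVec c i) * (Φ.mulVec c' i)| ≤ _ := h
    _ ≤ (Real.sqrt M * l2norm c) * (Real.sqrt M * l2norm c') := by
        apply mul_le_mul h1 h2 hs0' (by positivity)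
    _ = Real.sqrt M * Real.sqrt M * (l2norm c * l2norm c') := by ring
    _ = M * (l2norm c * l2norm c') := by rw [hMs]
    _ ≤ (1 + M) * l2norm c * l2norm c' := by nlinarith [mul_nonneg hc hc']

end helpers

section spec
variable {n p : ℕ} (Φ : Matrix (Fin n) (Fin p) ℝ)

lemma ripConst_nonneg (k : ℕ) : 0 ≤ ripConst Φ k :=
  le_csInf (ripSet_nonempty Φ k) (fun _ hδ => hδ.1)

lemma roConst_nonneg (k k' : ℕ) : 0 ≤ roConst Φ k k' :=
  le_csInf (roSet_nonempty Φ k k') (fun _ hθ => hθ.1)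

lemma ripConst_spec {k : ℕ} {c : Fin p → ℝ} (hc : IsSparse k c) :
    (1 - ripConst Φ k) * ∑ i, (c i)^2 ≤ (∑ i, (Φ.mulVec c i)^2) ∧
    (∑ i, (Φ.mulVec c i)^2) ≤ (1 + ripConst Φ k) * ∑ i, (c i)^2 := by
  have hs : (0:ℝ) ≤ ∑ i, (c i)^2 := Finset.sum_nonneg fun i _ => sq_nonneg _
  set s : ℝ := ∑ i, (c i)^2 with hsdef
  set t : ℝ := ∑ i, (Φ.mulVec c i)^2 with htdef
  set D : ℝ := ripConst Φ k with hD
  have key : ∀ ε : ℝ, 0 < ε → ∃ δ : ℝ, δ < D + ε ∧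
      (1 - δ) * s ≤ t ∧ t ≤ (1 + δ) * s := by
    intro ε hε
    have hlt : sInf {δ : ℝ | 0 ≤ δ ∧ ∀ c : Fin p → ℝ, IsSparse k c →
        (1 - δ) * ∑ i, (c i)^2 ≤ (∑ i, (Φ.mulVec c i)^2) ∧
        (∑ i, (Φ.mulVec c i)^2) ≤ (1 + δ) * ∑ i, (c i)^2} < D + ε := by
      rw [← ripConst]; linarith
    obtain ⟨δ, hδS, hδlt⟩ := exists_lt_of_csInf_lt (ripSet_nonempty Φ k) hlt
    exact ⟨δ, hδlt, (hδS.2 c hc).1, (hδS.2 c hc).2⟩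
  constructor
  · refine le_of_forall_pos_le_add (fun ε hε => ?_)
    have hd : 0 < ε / (s + 1) := div_pos hε (by linarith)
    obtain ⟨δ, hδlt, h1, _⟩ := key _ hd
    have hm : (δ - D) * s ≤ (ε / (s+1)) * s := mul_le_mul_of_nonneg_right (by linarith) hs
    have hm2 : (ε / (s+1)) * s ≤ ε := by
      rw [div_mul_eq_mul_div, div_le_iff₀ (by linarith)]; nlinarith
    nlinarith
  · refine le_of_forall_pos_le_add (fun ε hε => ?_)
    have hd : 0 < ε / (s + 1) := div_pos hε (by linarith)
    obtain ⟨δ, hδlt, _, h2⟩ := key _ hd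
    have hm : (δ - D) * s ≤ (ε / (s+1)) * s := mul_le_mul_of_nonneg_right (by linarith) hs
    have hm2 : (ε / (s+1)) * s ≤ ε := by
      rw [div_mul_eq_mul_div, div_le_iff₀ (by linarith)]; nlinarith
    nlinarith

lemma roConst_spec {k k' : ℕ} {c c' : Fin p → ℝ} (hc : IsSparse k c) (hc' : IsSparse k' c')
    (hd : ∀ i, c i = 0 ∨ c' i = 0) :
    |∑ i, (Φ.mulVec c i) * (Φ.mulVec c' i)| ≤ roConst Φ k k' * l2norm c * l2norm c' := by
  have hr : (0:ℝ) ≤ l2norm c * l2norm c' :=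
    mul_nonneg (Real.sqrt_nonneg _) (Real.sqrt_nonneg _)
  set r : ℝ := l2norm c * l2norm c' with hrdef
  set T : ℝ := roConst Φ k k' with hT
  rw [mul_assoc, ← hrdef]
  refine le_of_forall_pos_le_add (fun ε hε => ?_)
  have hdd : 0 < ε / (r + 1) := div_pos hε (by linarith)
  have hlt : sInf {θ : ℝ | 0 ≤ θ ∧ ∀ c c' : Fin p → ℝ, IsSparse k c → IsSparse k' c' →
      (∀ i, c i = 0 ∨ c' i = 0) →
      |∑ i, (Φ.mulVec c i) * (Φ.mulVec c' i)| ≤ θ * l2norm c * l2norm c'} < T + ε / (r+1) := by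
    rw [← roConst]; linarith
  obtain ⟨θ, hθS, hθlt⟩ := exists_lt_of_csInf_lt (roSet_nonempty Φ k k') hlt
  have h1 := hθS.2 c c' hc hc' hd
  rw [mul_assoc, ← hrdef] at h1
  have hm : (θ - T) * r ≤ (ε / (r+1)) * r := mul_le_mul_of_nonneg_right (by linarith) hr
  have hm2 : (ε / (r+1)) * r ≤ ε := by
    rw [div_mul_eq_mul_div, div_le_iff₀ (by linarith)]; nlinarith
  nlinarith

end spec

open Finset in
lemma exists_split {p : ℕ} (T : Finset (Fin p)) (f : Fin p → ℝ) (hf : ∀ i, 0 ≤ f i)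
    (k k' : ℕ) (hk' : 0 < k') (hT : T.card ≤ k + k') :
    ∃ S, S ⊆ T ∧ S.card ≤ k ∧ (T \ S).card ≤ k' ∧
      (k' : ℝ) * ∑ i ∈ S, f i ≤ (k : ℝ) * ∑ i ∈ T \ S, f i := by
  by_cases hcase : T.card ≤ k'
  · refine ⟨∅, empty_subset _, by simp, by simpa using hcase, ?_⟩
    simp only [Finset.sum_empty, mul_zero, sdiff_empty]
    exact mul_nonneg (Nat.cast_nonneg _) (Finset.sum_nonneg fun i _ => hf i)
  · push_neg at hcase
    set m := T.card - k' with hmdef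
    have hm : m ≤ k := by omega
    have hmT : m ≤ T.card := by omega
    have hne : (T.powersetCard m).Nonempty := Finset.powersetCard_nonempty.mpr hmT
    obtain ⟨S, hSmem, hmin⟩ := Finset.exists_min_image (T.powersetCard m)
      (fun S => ∑ i ∈ S, f i) hne
    rw [Finset.mem_powersetCard] at hSmem
    obtain ⟨hST, hcard⟩ := hSmem
    have hTS : (T \ S).card = k' := by rw [card_sdiff_of_subset hST]; omega
    have hswap : ∀ x ∈ S, ∀ y ∈ T \ S, f x ≤ f y := by
      intro x hx y hy
      by_contra hlt
      push_neg at hlt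
      rw [Finset.mem_sdiff] at hy
      have hyx : y ∉ S.erase x := fun h => hy.2 (Finset.mem_of_mem_erase h)
      have hS'T : insert y (S.erase x) ⊆ T := by
        intro z hz
        rcases Finset.mem_insert.mp hz with h | h
        · exact h ▸ hy.1
        · exact hST (Finset.mem_of_mem_erase h)
      have hS'card : (insert y (S.erase x)).card = m := by
        rw [Finset.card_insert_of_notMem hyx, Finset.card_erase_of_mem hx, hcard]
        have h1m : 0 < m := by rw [← hcard]; exact Finset.card_pos.mpr ⟨x, hx⟩
        omega
      have hsum : ∑ i ∈ insert y (S.erase x), f i < ∑ i ∈ S, f i := by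
        rw [Finset.sum_insert hyx]
        have := Finset.add_sum_erase S f hx
        linarith [this]
      exact absurd (hmin _ (Finset.mem_powersetCard.mpr ⟨hS'T, hS'card⟩)) (not_le.mpr hsum)
    have hTSne : (T \ S).Nonempty := Finset.card_pos.mp (by omega)
    obtain ⟨y₀, hy₀, hy₀min⟩ := Finset.exists_min_image (T \ S) f hTSne
    have h1 : ∑ i ∈ S, f i ≤ (m : ℝ) * f y₀ := by
      calc ∑ i ∈ S, f i ≤ ∑ _i ∈ S, f y₀ :=
            Finset.sum_le_sum (fun x hx => hswap x hx y₀ hy₀)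
        _ = (m : ℝ) * f y₀ := by rw [Finset.sum_const, hcard, nsmul_eq_mul]
    have h2 : (k' : ℝ) * f y₀ ≤ ∑ i ∈ T \ S, f i := by
      calc (k' : ℝ) * f y₀ = ∑ _i ∈ T \ S, f y₀ := by
            rw [Finset.sum_const, hTS, nsmul_eq_mul]
        _ ≤ ∑ i ∈ T \ S, f i := Finset.sum_le_sum (fun y hy => hy₀min y hy)
    refine ⟨S, hST, hcard ▸ hm, le_of_eq hTS, ?_⟩
    have hfy : 0 ≤ f y₀ := hf y₀
    have hmk : (m : ℝ) ≤ (k : ℝ) := Nat.cast_le.mpr hm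
    have hk'0 : (0:ℝ) ≤ (k' : ℝ) := Nat.cast_nonneg _
    have hk0 : (0:ℝ) ≤ (k : ℝ) := Nat.cast_nonneg _
    calc (k' : ℝ) * ∑ i ∈ S, f i ≤ (k' : ℝ) * ((m : ℝ) * f y₀) :=
          mul_le_mul_of_nonneg_left h1 hk'0
      _ ≤ (k' : ℝ) * ((k : ℝ) * f y₀) :=
          mul_le_mul_of_nonneg_left (mul_le_mul_of_nonneg_right hmk hfy) hk'0
      _ = (k : ℝ) * ((k' : ℝ) * f y₀) := by ring
      _ ≤ (k : ℝ) * ∑ i ∈ T \ S, f i := mul_le_mul_of_nonneg_left h2 hk0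

lemma key_bound_s8 {n p : ℕ} (Φ : Matrix (Fin n) (Fin p) ℝ) (k k' : ℕ)
    (hk : 0 < k) (hk' : 0 < k') (c₁ c₂ : Fin p → ℝ)
    (h1 : IsSparse k c₁) (h2 : IsSparse k' c₂)
    (hdisj : ∀ i, c₁ i = 0 ∨ c₂ i = 0)
    (hratio : (ripConst Φ k - ripConst Φ k') *
      ((k' : ℝ) * ∑ i, (c₁ i)^2 - (k : ℝ) * ∑ i, (c₂ i)^2) ≤ 0) :
    (1 - (roConst Φ k k' + ((k : ℝ) * ripConst Φ k + (k' : ℝ) * ripConst Φ k') / ((k : ℝ) + (k' : ℝ))))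
        * ∑ i, ((c₁ + c₂) i)^2 ≤ (∑ i, (Φ.mulVec (c₁ + c₂) i)^2) ∧
    (∑ i, (Φ.mulVec (c₁ + c₂) i)^2) ≤
      (1 + (roConst Φ k k' + ((k : ℝ) * ripConst Φ k + (k' : ℝ) * ripConst Φ k') / ((k : ℝ) + (k' : ℝ))))
        * ∑ i, ((c₁ + c₂) i)^2 := by
  set δ₁ := ripConst Φ k with hδ₁
  set δ₂ := ripConst Φ k' with hδ₂
  set θ := roConst Φ k k' with hθ
  have hδ₁0 : 0 ≤ δ₁ := ripConst_nonneg Φ k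
  have hδ₂0 : 0 ≤ δ₂ := ripConst_nonneg Φ k'
  have hθ0 : 0 ≤ θ := roConst_nonneg Φ k k'
  set a := ∑ i, (c₁ i)^2 with ha
  set b := ∑ i, (c₂ i)^2 with hb
  have ha0 : 0 ≤ a := Finset.sum_nonneg fun i _ => sq_nonneg _
  have hb0 : 0 ≤ b := Finset.sum_nonneg fun i _ => sq_nonneg _
  set A₁ := ∑ i, (Φ.mulVec c₁ i)^2 with hA₁
  set A₂ := ∑ i, (Φ.mulVec c₂ i)^2 with hA₂
  set X := ∑ i, (Φ.mulVec c₁ i) * (Φ.mulVec c₂ i) with hX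
  have hrip1 := ripConst_spec Φ h1
  have hrip2 := ripConst_spec Φ h2
  have hcross : |X| ≤ θ * (Real.sqrt a * Real.sqrt b) := by
    have := roConst_spec Φ h1 h2 hdisj
    simpa [l2norm, mul_assoc] using this
  have hXle : X ≤ θ * (Real.sqrt a * Real.sqrt b) := (abs_le.mp hcross).2
  have hXge : -(θ * (Real.sqrt a * Real.sqrt b)) ≤ X := (abs_le.mp hcross).1
  -- sum of squares decomposes
  have hsum_sq : ∑ i, ((c₁ + c₂) i)^2 = a + b := by
    rw [ha, hb, ← Finset.sum_add_distrib]
    apply Finset.sum_congr rfl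
    intro i _
    rcases hdisj i with h | h <;> simp [h]
  have hΦsum : ∑ i, (Φ.mulVec (c₁ + c₂) i)^2 = A₁ + A₂ + 2 * X := by
    rw [hA₁, hA₂, hX, Matrix.mulVec_add]
    rw [Finset.mul_sum, ← Finset.sum_add_distrib, ← Finset.sum_add_distrib]
    apply Finset.sum_congr rfl
    intro i _
    simp [Pi.add_apply]
    ring
  have hAM : 2 * (Real.sqrt a * Real.sqrt b) ≤ a + b := by
    nlinarith [sq_nonneg (Real.sqrt a - Real.sqrt b), Real.sq_sqrt ha0, Real.sq_sqrt hb0]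
  have hθAM : θ * (2 * (Real.sqrt a * Real.sqrt b)) ≤ θ * (a + b) :=
    mul_le_mul_of_nonneg_left hAM hθ0
  set Q := ((k : ℝ) * δ₁ + (k' : ℝ) * δ₂) / ((k : ℝ) + (k' : ℝ)) with hQ
  have hkk : (0:ℝ) < (k : ℝ) + (k' : ℝ) := by positivity
  have hkey : δ₁ * a + δ₂ * b ≤ Q * (a + b) := by
    rw [hQ, div_mul_eq_mul_div, le_div_iff₀ hkk]
    nlinarith [hratio]
  rw [hsum_sq, hΦsum]
  constructor
  · linarith [hrip1.1, hrip2.1, hXge, hθAM, hkey]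
  · linarith [hrip1.2, hrip2.2, hXle, hθAM, hkey]

lemma sum_sq_ite_mem {p : ℕ} (c : Fin p → ℝ) (S : Finset (Fin p)) :
    ∑ i, (if i ∈ S then c i else 0)^2 = ∑ i ∈ S, (c i)^2 := by
  have h0 : ∀ i, (if i ∈ S then c i else 0)^2 = if i ∈ S then (c i)^2 else 0 := by
    intro i; by_cases h : i ∈ S <;> simp [h]
  simp_rw [h0]
  rw [Finset.sum_ite_mem, Finset.univ_inter]

lemma sum_sq_ite_notMem {p : ℕ} (c : Fin p → ℝ) (S T : Finset (Fin p))
    (hczero : ∀ i, i ∉ T → c i = 0) :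
    ∑ i, (if i ∈ S then 0 else c i)^2 = ∑ i ∈ T \ S, (c i)^2 := by
  have h1 : ∑ i, (if i ∈ S then 0 else c i)^2 = ∑ i ∈ Finset.univ \ S, (c i)^2 := by
    have h0 : ∀ i, (if i ∈ S then 0 else c i)^2 = if i ∈ Sᶜ then (c i)^2 else 0 := by
      intro i; by_cases h : i ∈ S <;> simp [h]
    simp_rw [h0]
    rw [Finset.sum_ite_mem, Finset.univ_inter, Finset.compl_eq_univ_sdiff]
  rw [h1]
  symm
  apply Finset.sum_subset
  · intro i hi
    rw [Finset.mem_sdiff] at hi ⊢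
    exact ⟨Finset.mem_univ i, hi.2⟩
  · intro i hi1 hi2
    rw [Finset.mem_sdiff] at hi1 hi2
    have : i ∉ T := by tauto
    rw [hczero i this]; ring

theorem ripConst_le_roConst_add_weighted (n p k k' : ℕ) (Φ : Matrix (Fin n) (Fin p) ℝ)
    (hk : 0 < k) (hk' : 0 < k') (hp : k + k' ≤ p) :
    ripConst Φ (k + k') ≤
      roConst Φ k k' +
        ((k : ℝ) * ripConst Φ k + (k' : ℝ) * ripConst Φ k') / ((k : ℝ) + (k' : ℝ)) := by
  apply csInf_le ⟨0, fun δ hδ => hδ.1⟩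
  refine ⟨?_, fun c hc => ?_⟩
  · have h1 : 0 ≤ ((k : ℝ) * ripConst Φ k + (k' : ℝ) * ripConst Φ k') / ((k : ℝ) + (k' : ℝ)) := by
      have := ripConst_nonneg Φ k
      have := ripConst_nonneg Φ k'
      have hkk : (0:ℝ) < (k : ℝ) + (k' : ℝ) := by positivity
      positivity
    linarith [roConst_nonneg Φ k k']
  · set T := Finset.univ.filter (fun i => c i ≠ 0) with hT
    have hTcard : T.card ≤ k + k' := hc
    have hczero : ∀ i, i ∉ T → c i = 0 := by
      intro i hi
      by_contra h
      exact hi (Finset.mem_filter.mpr ⟨Finset.mem_univ i, h⟩)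
    rcases le_or_gt (ripConst Φ k') (ripConst Φ k) with hcmp | hcmp
    · obtain ⟨S, hST, hSk, hTSk', hsplit⟩ := exists_split T (fun i => (c i)^2)
        (fun i => sq_nonneg _) k k' hk' hTcard
      set c₁ : Fin p → ℝ := fun i => if i ∈ S then c i else 0 with hc₁
      set c₂ : Fin p → ℝ := fun i => if i ∈ S then 0 else c i with hc₂
      have hceq : c = c₁ + c₂ := by
        funext i; by_cases h : i ∈ S <;> simp [hc₁, hc₂, h]
      have hs1 : IsSparse k c₁ := by
        refine le_trans (Finset.card_le_card (fun i hi => ?_)) hSk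
        rw [Finset.mem_filter] at hi
        by_contra h
        exact hi.2 (by simp [hc₁, h])
      have hs2 : IsSparse k' c₂ := by
        refine le_trans (Finset.card_le_card (fun i hi => ?_)) hTSk'
        rw [Finset.mem_filter] at hi
        rw [Finset.mem_sdiff]
        by_cases h : i ∈ S
        · exact absurd (by simp [hc₂, h]) hi.2
        · refine ⟨Finset.mem_filter.mpr ⟨Finset.mem_univ i, fun h0 => hi.2 ?_⟩, h⟩
          simp [hc₂, h, h0]
      have hdisj : ∀ i, c₁ i = 0 ∨ c₂ i = 0 := by
        intro i; by_cases h : i ∈ S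
        · right; simp [hc₂, h]
        · left; simp [hc₁, h]
      have haeq : ∑ i, (c₁ i)^2 = ∑ i ∈ S, (c i)^2 := sum_sq_ite_mem c S
      have hbeq : ∑ i, (c₂ i)^2 = ∑ i ∈ T \ S, (c i)^2 := sum_sq_ite_notMem c S T hczero
      have hratio : (ripConst Φ k - ripConst Φ k') *
          ((k' : ℝ) * ∑ i, (c₁ i)^2 - (k : ℝ) * ∑ i, (c₂ i)^2) ≤ 0 := by
        apply mul_nonpos_of_nonneg_of_nonpos (by linarith)
        rw [haeq, hbeq]; linarith [hsplit]
      have := key_bound_s8 Φ k k' hk hk' c₁ c₂ hs1 hs2 hdisj hratio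
      rw [← hceq] at this
      exact this
    · obtain ⟨S, hST, hSk', hTSk, hsplit⟩ := exists_split T (fun i => (c i)^2)
        (fun i => sq_nonneg _) k' k hk (by omega)
      set c₂ : Fin p → ℝ := fun i => if i ∈ S then c i else 0 with hc₂
      set c₁ : Fin p → ℝ := fun i => if i ∈ S then 0 else c i with hc₁
      have hceq : c = c₁ + c₂ := by
        funext i; by_cases h : i ∈ S <;> simp [hc₁, hc₂, h]
      have hs2 : IsSparse k' c₂ := by
        refine le_trans (Finset.card_le_card (fun i hi => ?_)) hSk'
        rw [Finset.mem_filter] at hi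
        by_contra h
        exact hi.2 (by simp [hc₂, h])
      have hs1 : IsSparse k c₁ := by
        refine le_trans (Finset.card_le_card (fun i hi => ?_)) hTSk
        rw [Finset.mem_filter] at hi
        rw [Finset.mem_sdiff]
        by_cases h : i ∈ S
        · exact absurd (by simp [hc₁, h]) hi.2
        · refine ⟨Finset.mem_filter.mpr ⟨Finset.mem_univ i, fun h0 => hi.2 ?_⟩, h⟩
          simp [hc₁, h, h0]
      have hdisj : ∀ i, c₁ i = 0 ∨ c₂ i = 0 := by
        intro i; by_cases h : i ∈ S
        · left; simp [hc₁, h]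
        · right; simp [hc₂, h]
      have hbeq : ∑ i, (c₂ i)^2 = ∑ i ∈ S, (c i)^2 := sum_sq_ite_mem c S
      have haeq : ∑ i, (c₁ i)^2 = ∑ i ∈ T \ S, (c i)^2 := sum_sq_ite_notMem c S T hczero
      have hratio : (ripConst Φ k - ripConst Φ k') *
          ((k' : ℝ) * ∑ i, (c₁ i)^2 - (k : ℝ) * ∑ i, (c₂ i)^2) ≤ 0 := by
        apply mul_nonpos_of_nonpos_of_nonneg (by linarith)
        rw [haeq, hbeq]; linarith [hsplit]
      have := key_bound_s8 Φ k k' hk hk' c₁ c₂ hs1 hs2 hdisj hratio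
      rw [← hceq] at this
      exact this
end

section
/- For any n×p matrix Φ, positive integers k, k₁,…,k_l with k + Σᵢ kᵢ ≤ p, the restricted orthogonality constant satisfies θ_{k, k₁+⋯+k_l}(Φ) ≤ √(Σᵢ θ_{k,kᵢ}(Φ)²) ≤ √(Σᵢ δ_{k+kᵢ}(Φ)²). -/
namespace RoAux

def ROSet {n p : ℕ} (Φ : Matrix (Fin n) (Fin p) ℝ) (k k' : ℕ) : Set ℝ :=
  {θ : ℝ | 0 ≤ θ ∧ ∀ c c' : Fin p → ℝ, IsSparse k c → IsSparse k' c' →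
    (∀ i, c i = 0 ∨ c' i = 0) →
    |∑ i, (Φ.mulVec c i) * (Φ.mulVec c' i)| ≤ θ * l2norm c * l2norm c'}

def RIPSet {n p : ℕ} (Φ : Matrix (Fin n) (Fin p) ℝ) (k : ℕ) : Set ℝ :=
  {δ : ℝ | 0 ≤ δ ∧ ∀ c : Fin p → ℝ, IsSparse k c →
    (1 - δ) * ∑ i, (c i)^2 ≤ (∑ i, (Φ.mulVec c i)^2) ∧
    (∑ i, (Φ.mulVec c i)^2) ≤ (1 + δ) * ∑ i, (c i)^2}

variable {n p : ℕ} (Φ : Matrix (Fin n) (Fin p) ℝ)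

lemma roConst_def (k k' : ℕ) : roConst Φ k k' = sInf (ROSet Φ k k') := rfl
lemma ripConst_def (k : ℕ) : ripConst Φ k = sInf (RIPSet Φ k) := rfl

lemma l2norm_nonneg {p : ℕ} (c : Fin p → ℝ) : 0 ≤ l2norm c := Real.sqrt_nonneg _

lemma l2norm_sq {p : ℕ} (c : Fin p → ℝ) : (l2norm c)^2 = ∑ i, (c i)^2 :=
  Real.sq_sqrt (by positivity)

lemma mulVec_sq_le (c : Fin p → ℝ) :
    ∑ i, (Φ.mulVec c i)^2 ≤ (∑ i, ∑ j, (Φ i j)^2) * ∑ j, (c j)^2 := by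
  rw [Finset.sum_mul]
  apply Finset.sum_le_sum; intro i _
  simpa [Matrix.mulVec, dotProduct] using
    Finset.sum_mul_sq_le_sq_mul_sq Finset.univ (fun j => Φ i j) c

lemma ROSet_nonempty (k k' : ℕ) : (ROSet Φ k k').Nonempty := by
  refine ⟨(∑ i, ∑ j, (Φ i j)^2), by positivity, fun c c' _ _ _ => ?_⟩
  set M := ∑ i, ∑ j, (Φ i j)^2 with hM
  have hM0 : 0 ≤ M := by positivity
  have h1 : |∑ i, (Φ.mulVec c i) * (Φ.mulVec c' i)| ≤
      Real.sqrt (∑ i, (Φ.mulVec c i)^2) * Real.sqrt (∑ i, (Φ.mulVec c' i)^2) := by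
    rw [← Real.sqrt_mul (by positivity)]
    rw [← Real.sqrt_sq (abs_nonneg _)]
    apply Real.sqrt_le_sqrt
    rw [sq_abs]
    exact Finset.sum_mul_sq_le_sq_mul_sq Finset.univ _ _
  have h2 : Real.sqrt (∑ i, (Φ.mulVec c i)^2) ≤ Real.sqrt M * l2norm c := by
    rw [l2norm, ← Real.sqrt_mul hM0]
    exact Real.sqrt_le_sqrt (mulVec_sq_le Φ c)
  have h3 : Real.sqrt (∑ i, (Φ.mulVec c' i)^2) ≤ Real.sqrt M * l2norm c' := by
    rw [l2norm, ← Real.sqrt_mul hM0]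
    exact Real.sqrt_le_sqrt (mulVec_sq_le Φ c')
  calc |∑ i, (Φ.mulVec c i) * (Φ.mulVec c' i)|
      ≤ Real.sqrt (∑ i, (Φ.mulVec c i)^2) * Real.sqrt (∑ i, (Φ.mulVec c' i)^2) := h1
    _ ≤ (Real.sqrt M * l2norm c) * (Real.sqrt M * l2norm c') := by
        exact mul_le_mul h2 h3 (Real.sqrt_nonneg _) (mul_nonneg (Real.sqrt_nonneg _) (l2norm_nonneg c))
    _ = (Real.sqrt M * Real.sqrt M) * l2norm c * l2norm c' := by ring
    _ = M * l2norm c * l2norm c' := by rw [Real.mul_self_sqrt hM0]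

lemma RIPSet_nonempty (k : ℕ) : (RIPSet Φ k).Nonempty := by
  refine ⟨1 + ∑ i, ∑ j, (Φ i j)^2, by positivity, fun c _ => ?_⟩
  have h := mulVec_sq_le Φ c
  have h1 : 0 ≤ ∑ i, (Φ.mulVec c i)^2 := by positivity
  have h2 : 0 ≤ ∑ i, (c i)^2 := by positivity
  constructor
  · nlinarith [sq_nonneg (1 : ℝ)]
  · nlinarith

lemma roConst_nonneg (k k' : ℕ) : 0 ≤ roConst Φ k k' :=
  Real.sInf_nonneg (fun _ hx => hx.1)

lemma ripConst_nonneg (k : ℕ) : 0 ≤ ripConst Φ k :=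
  Real.sInf_nonneg (fun _ hx => hx.1)

lemma roConst_le {k k' : ℕ} {θ : ℝ} (hθ : θ ∈ ROSet Φ k k') : roConst Φ k k' ≤ θ :=
  csInf_le ⟨0, fun _ hx => hx.1⟩ hθ

lemma sum_sq_eq_zero {p : ℕ} {c : Fin p → ℝ} (h : ∑ i, (c i)^2 = 0) : c = 0 := by
  funext i
  have := (Finset.sum_eq_zero_iff_of_nonneg (fun i _ => sq_nonneg (c i))).mp h i (Finset.mem_univ i)
  exact pow_eq_zero_iff (two_ne_zero) |>.mp this

lemma roConst_spec {k k' : ℕ} (c c' : Fin p → ℝ) (hc : IsSparse k c) (hc' : IsSparse k' c')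
    (hd : ∀ i, c i = 0 ∨ c' i = 0) :
    |∑ i, (Φ.mulVec c i) * (Φ.mulVec c' i)| ≤ roConst Φ k k' * l2norm c * l2norm c' := by
  by_cases h1 : ∑ i, (c i)^2 = 0
  · have : c = 0 := sum_sq_eq_zero h1
    subst this
    simp [Matrix.mulVec_zero, l2norm, Real.sqrt_eq_zero', h1]
  by_cases h2 : ∑ i, (c' i)^2 = 0
  · have : c' = 0 := sum_sq_eq_zero h2
    subst this
    simp [Matrix.mulVec_zero, l2norm]
  have ha : 0 < l2norm c := Real.sqrt_pos.mpr (lt_of_le_of_ne (by positivity) (Ne.symm h1))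
  have hb : 0 < l2norm c' := Real.sqrt_pos.mpr (lt_of_le_of_ne (by positivity) (Ne.symm h2))
  have key : |∑ i, (Φ.mulVec c i) * (Φ.mulVec c' i)| / (l2norm c * l2norm c') ≤ roConst Φ k k' := by
    apply le_csInf (ROSet_nonempty Φ k k')
    intro θ hθ
    rw [div_le_iff₀ (by positivity)]
    calc |∑ i, (Φ.mulVec c i) * (Φ.mulVec c' i)| ≤ θ * l2norm c * l2norm c' := hθ.2 c c' hc hc' hd
      _ = θ * (l2norm c * l2norm c') := by ring
  rw [div_le_iff₀ (by positivity)] at key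
  calc |∑ i, (Φ.mulVec c i) * (Φ.mulVec c' i)| ≤ roConst Φ k k' * (l2norm c * l2norm c') := key
    _ = roConst Φ k k' * l2norm c * l2norm c' := by ring

lemma ripConst_spec {k : ℕ} (c : Fin p → ℝ) (hc : IsSparse k c) :
    (1 - ripConst Φ k) * ∑ i, (c i)^2 ≤ (∑ i, (Φ.mulVec c i)^2) ∧
    (∑ i, (Φ.mulVec c i)^2) ≤ (1 + ripConst Φ k) * ∑ i, (c i)^2 := by
  by_cases h1 : ∑ i, (c i)^2 = 0
  · have : c = 0 := sum_sq_eq_zero h1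
    subst this
    simp [Matrix.mulVec_zero, h1]
  have hs : 0 < ∑ i, (c i)^2 := lt_of_le_of_ne (by positivity) (Ne.symm h1)
  set s := ∑ i, (c i)^2
  set t := ∑ i, (Φ.mulVec c i)^2 with ht
  have key1 : 1 - t / s ≤ ripConst Φ k := by
    apply le_csInf (RIPSet_nonempty Φ k)
    intro δ hδ
    have h := (hδ.2 c hc).1
    have h' : 1 - δ ≤ t / s := (le_div_iff₀ hs).mpr (by linarith)
    linarith
  have key2 : t / s - 1 ≤ ripConst Φ k := by
    apply le_csInf (RIPSet_nonempty Φ k)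
    intro δ hδ
    have h := (hδ.2 c hc).2
    have h' : t / s ≤ 1 + δ := (div_le_iff₀ hs).mpr (by linarith)
    linarith
  constructor
  · exact (le_div_iff₀ hs).mp (by linarith)
  · exact (div_le_iff₀ hs).mp (by linarith)


lemma isSparse_smul {p k : ℕ} {c : Fin p → ℝ} (h : IsSparse k c) (s : ℝ) :
    IsSparse k (s • c) := by
  refine le_trans (Finset.card_le_card ?_) h
  intro i hi
  simp only [Finset.mem_filter, Finset.mem_univ, true_and, Pi.smul_apply, smul_eq_mul] at *
  exact fun h0 => hi (by rw [h0, mul_zero])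

lemma sparse_combine {p k k' : ℕ} {u v w : Fin p → ℝ} (hu : IsSparse k u) (hv : IsSparse k' v)
    (hw : ∀ i, u i = 0 → v i = 0 → w i = 0) : IsSparse (k + k') w := by
  refine le_trans (le_trans (Finset.card_le_card ?_) (Finset.card_union_le _ _))
    (add_le_add hu hv)
  intro i hi
  simp only [Finset.mem_filter, Finset.mem_union, Finset.mem_univ, true_and] at *
  by_contra hcon
  push_neg at hcon
  exact hi (hw i hcon.1 hcon.2)

lemma roConst_le_ripConst (k k' : ℕ) : roConst Φ k k' ≤ ripConst Φ (k + k') := by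
  apply roConst_le
  refine ⟨ripConst_nonneg Φ _, fun c c' hc hc' hd => ?_⟩
  by_cases h1 : ∑ i, (c i)^2 = 0
  · have hcz : c = 0 := sum_sq_eq_zero h1
    subst hcz
    simp [Matrix.mulVec_zero, l2norm]
  by_cases h2 : ∑ i, (c' i)^2 = 0
  · have hcz : c' = 0 := sum_sq_eq_zero h2
    subst hcz
    simp [Matrix.mulVec_zero, l2norm]
  have hs2 : 0 < ∑ i, (c i)^2 := lt_of_le_of_ne (by positivity) (Ne.symm h1)
  have ht2 : 0 < ∑ i, (c' i)^2 := lt_of_le_of_ne (by positivity) (Ne.symm h2)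
  set a := l2norm c with ha
  set b := l2norm c' with hb
  have ha0 : 0 < a := Real.sqrt_pos.mpr hs2
  have hb0 : 0 < b := Real.sqrt_pos.mpr ht2
  have ha2 : a^2 = ∑ i, (c i)^2 := l2norm_sq c
  have hb2 : b^2 = ∑ i, (c' i)^2 := l2norm_sq c'
  set s := Real.sqrt (b / a) with hsdef
  have hs0 : 0 < s := Real.sqrt_pos.mpr (by positivity)
  have hss : s^2 = b / a := Real.sq_sqrt (by positivity)
  set u : Fin p → ℝ := s • c with hu
  set v : Fin p → ℝ := s⁻¹ • c' with hv
  have huapp : ∀ i, u i = s * c i := fun i => rfl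
  have hvapp : ∀ i, v i = s⁻¹ * c' i := fun i => rfl
  have hsu : ∑ i, (u i)^2 = a * b := by
    simp only [huapp, mul_pow]
    rw [← Finset.mul_sum, ← ha2, hss]
    field_simp
  have hsv : ∑ i, (v i)^2 = a * b := by
    simp only [hvapp, mul_pow, inv_pow]
    rw [← Finset.mul_sum, ← hb2, hss]
    field_simp
  have huv : ∀ i, u i * v i = 0 := by
    intro i
    rcases hd i with h | h <;> simp [huapp, hvapp, h]
  have hcu : IsSparse k u := isSparse_smul hc s
  have hcv : IsSparse k' v := isSparse_smul hc' s⁻¹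
  have hplus : IsSparse (k + k') (u + v) :=
    sparse_combine hcu hcv (fun i e1 e2 => by simp [Pi.add_apply, e1, e2])
  have hminus : IsSparse (k + k') (u - v) :=
    sparse_combine hcu hcv (fun i e1 e2 => by simp [Pi.sub_apply, e1, e2])
  have hsum_p : ∑ i, ((u + v) i)^2 = 2 * (a * b) := by
    have step : ∀ i, ((u + v) i)^2 = (u i)^2 + (v i)^2 := by
      intro i
      have h := huv i
      simp only [Pi.add_apply]
      nlinarith [huv i]
    rw [Finset.sum_congr rfl (fun i _ => step i), Finset.sum_add_distrib, hsu, hsv]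
    ring
  have hsum_m : ∑ i, ((u - v) i)^2 = 2 * (a * b) := by
    have step : ∀ i, ((u - v) i)^2 = (u i)^2 + (v i)^2 := by
      intro i
      simp only [Pi.sub_apply]
      nlinarith [huv i]
    rw [Finset.sum_congr rfl (fun i _ => step i), Finset.sum_add_distrib, hsu, hsv]
    ring
  have hup := ripConst_spec Φ (u + v) hplus
  have hum := ripConst_spec Φ (u - v) hminus
  rw [hsum_p] at hup
  rw [hsum_m] at hum
  set δ := ripConst Φ (k + k') with hδ
  set P := ∑ i, (Φ.mulVec (u + v) i)^2 with hP
  set Q := ∑ i, (Φ.mulVec (u - v) i)^2 with hQ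
  have hpol : 4 * ∑ i, (Φ.mulVec u i) * (Φ.mulVec v i) = P - Q := by
    rw [hP, hQ, ← Finset.sum_sub_distrib, Finset.mul_sum]
    apply Finset.sum_congr rfl
    intro i _
    simp only [Matrix.mulVec_add, Matrix.mulVec_sub, Pi.add_apply, Pi.sub_apply]
    ring
  have hscale : ∑ i, (Φ.mulVec u i) * (Φ.mulVec v i) =
      ∑ i, (Φ.mulVec c i) * (Φ.mulVec c' i) := by
    rw [hu, hv, Matrix.mulVec_smul, Matrix.mulVec_smul]
    apply Finset.sum_congr rfl
    intro i _
    simp only [Pi.smul_apply, smul_eq_mul]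
    field_simp
  rw [← hscale]
  have hkey : |∑ i, (Φ.mulVec u i) * (Φ.mulVec v i)| ≤ δ * (a * b) := by
    apply abs_le.mpr
    constructor
    · linarith [hpol, hup.1, hum.2]
    · linarith [hpol, hup.2, hum.1]
  calc |∑ i, (Φ.mulVec u i) * (Φ.mulVec v i)| ≤ δ * (a * b) := hkey
    _ = δ * a * b := by ring


lemma two_term_cauchy (x y z w : ℝ) (hx : 0 ≤ x) (hy : 0 ≤ y) (hz : 0 ≤ z) (hw : 0 ≤ w) :
    x * z + y * w ≤ Real.sqrt (x^2 + y^2) * Real.sqrt (z^2 + w^2) := by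
  have h0 : 0 ≤ x * z + y * w := by positivity
  calc x * z + y * w = Real.sqrt ((x * z + y * w)^2) := (Real.sqrt_sq h0).symm
    _ ≤ Real.sqrt ((x^2 + y^2) * (z^2 + w^2)) :=
        Real.sqrt_le_sqrt (by nlinarith [sq_nonneg (x * w - y * z)])
    _ = Real.sqrt (x^2 + y^2) * Real.sqrt (z^2 + w^2) := Real.sqrt_mul (by positivity) _

lemma roConst_zero_le (k : ℕ) : roConst Φ k 0 ≤ 0 := by
  apply roConst_le
  refine ⟨le_refl 0, fun c c' _ hc' _ => ?_⟩
  have hz : c' = 0 := by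
    funext i
    by_contra h
    have : i ∈ Finset.univ.filter (fun i => c' i ≠ 0) := by
      simp only [Finset.mem_filter, Finset.mem_univ, true_and]; exact h
    have h1 := Finset.card_pos.mpr ⟨i, this⟩
    have h2 : (Finset.univ.filter (fun i => c' i ≠ 0)).card ≤ 0 := hc'
    omega
  subst hz
  simp [Matrix.mulVec_zero]

lemma roConst_two_block (k a b : ℕ) :
    roConst Φ k (a + b) ≤ Real.sqrt ((roConst Φ k a)^2 + (roConst Φ k b)^2) := by
  apply roConst_le
  refine ⟨Real.sqrt_nonneg _, fun c c' hc hc' hd => ?_⟩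
  set θa := roConst Φ k a with hθa
  set θb := roConst Φ k b with hθb
  have hθa0 : 0 ≤ θa := roConst_nonneg Φ k a
  have hθb0 : 0 ≤ θb := roConst_nonneg Φ k b
  set S := Finset.univ.filter (fun i => c' i ≠ 0) with hS
  -- find T ⊆ S with |T| ≤ a and |S \ T| ≤ b
  have hsplit : ∃ T : Finset (Fin p), T ⊆ S ∧ T.card ≤ a ∧ (S \ T).card ≤ b := by
    by_cases hcard : S.card ≤ a
    · exact ⟨S, Finset.Subset.refl S, hcard, by simp⟩
    · push_neg at hcard
      obtain ⟨T, hTS, hTcard⟩ := Finset.exists_subset_card_eq (le_of_lt hcard)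
      refine ⟨T, hTS, le_of_eq hTcard, ?_⟩
      rw [Finset.card_sdiff_of_subset hTS, hTcard]
      have : S.card ≤ a + b := hc'
      omega
  obtain ⟨T, hTS, hTa, hTb⟩ := hsplit
  set u : Fin p → ℝ := fun i => if i ∈ T then c' i else 0 with hudef
  set v : Fin p → ℝ := fun i => if i ∈ T then 0 else c' i with hvdef
  have huvsum : c' = u + v := by
    funext i
    by_cases h : i ∈ T <;> simp [hudef, hvdef, h]
  have hcu : IsSparse a u := by
    refine le_trans (le_trans (Finset.card_le_card ?_) (Finset.card_le_card (Finset.Subset.refl T))) hTa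
    intro i hi
    simp only [Finset.mem_filter, Finset.mem_univ, true_and, hudef] at hi
    by_contra h
    simp [h] at hi
  have hcv : IsSparse b v := by
    refine le_trans (Finset.card_le_card ?_) (le_trans (le_refl (S \ T).card) hTb)
    intro i hi
    simp only [Finset.mem_filter, Finset.mem_univ, true_and, hvdef] at hi
    by_cases h : i ∈ T
    · simp [h] at hi
    · simp only [h, if_false] at hi
      simp only [Finset.mem_sdiff, hS, Finset.mem_filter, Finset.mem_univ, true_and]
      exact ⟨hi, h⟩
  have hdu : ∀ i, c i = 0 ∨ u i = 0 := by
    intro i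
    rcases hd i with h | h
    · exact Or.inl h
    · exact Or.inr (by simp [hudef, h])
  have hdv : ∀ i, c i = 0 ∨ v i = 0 := by
    intro i
    rcases hd i with h | h
    · exact Or.inl h
    · exact Or.inr (by simp [hvdef, h])
  have hub := roConst_spec Φ c u hc hcu hdu
  have hvb := roConst_spec Φ c v hc hcv hdv
  have hsplit_inner : ∑ i, (Φ.mulVec c i) * (Φ.mulVec c' i) =
      (∑ i, (Φ.mulVec c i) * (Φ.mulVec u i)) + ∑ i, (Φ.mulVec c i) * (Φ.mulVec v i) := by
    rw [huvsum, Matrix.mulVec_add]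
    simp only [Pi.add_apply, mul_add, Finset.sum_add_distrib]
  have hnorm : Real.sqrt ((l2norm u)^2 + (l2norm v)^2) = l2norm c' := by
    rw [l2norm_sq u, l2norm_sq v, ← Finset.sum_add_distrib]
    have heq : ∑ i, ((u i)^2 + (v i)^2) = ∑ i, (c' i)^2 :=
      Finset.sum_congr rfl (fun i _ => by by_cases h : i ∈ T <;> simp [hudef, hvdef, h])
    rw [heq]
    rfl
  calc |∑ i, (Φ.mulVec c i) * (Φ.mulVec c' i)|
      = |(∑ i, (Φ.mulVec c i) * (Φ.mulVec u i)) + ∑ i, (Φ.mulVec c i) * (Φ.mulVec v i)| := by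
        rw [hsplit_inner]
    _ ≤ |∑ i, (Φ.mulVec c i) * (Φ.mulVec u i)| + |∑ i, (Φ.mulVec c i) * (Φ.mulVec v i)| :=
        abs_add_le _ _
    _ ≤ θa * l2norm c * l2norm u + θb * l2norm c * l2norm v := add_le_add hub hvb
    _ = l2norm c * (θa * l2norm u + θb * l2norm v) := by ring
    _ ≤ l2norm c * (Real.sqrt (θa^2 + θb^2) *
          Real.sqrt ((l2norm u)^2 + (l2norm v)^2)) :=
        mul_le_mul_of_nonneg_left
          (two_term_cauchy θa θb (l2norm u) (l2norm v) hθa0 hθb0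
            (l2norm_nonneg u) (l2norm_nonneg v)) (l2norm_nonneg c)
    _ = Real.sqrt (θa^2 + θb^2) * l2norm c * l2norm c' := by rw [hnorm]; ring

lemma roConst_sum_le (k : ℕ) : ∀ (l : ℕ) (ks : Fin l → ℕ),
    roConst Φ k (∑ i, ks i) ≤ Real.sqrt (∑ i, (roConst Φ k (ks i))^2) := by
  intro l
  induction l with
  | zero =>
      intro ks
      simp only [Finset.univ_eq_empty, Finset.sum_empty, Real.sqrt_zero]
      exact roConst_zero_le Φ k
  | succ m ih =>
      intro ks
      rw [Fin.sum_univ_succ]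
      calc roConst Φ k (ks 0 + ∑ i : Fin m, ks i.succ)
          ≤ Real.sqrt ((roConst Φ k (ks 0))^2 + (roConst Φ k (∑ i : Fin m, ks i.succ))^2) :=
            roConst_two_block Φ k _ _
        _ ≤ Real.sqrt ((roConst Φ k (ks 0))^2 + ∑ i : Fin m, (roConst Φ k (ks i.succ))^2) := by
            apply Real.sqrt_le_sqrt
            have h1 : (roConst Φ k (∑ i : Fin m, ks i.succ))^2 ≤
                ∑ i : Fin m, (roConst Φ k (ks i.succ))^2 := by
              have h2 := ih (fun i => ks i.succ)
              have h3 := pow_le_pow_left₀ (roConst_nonneg Φ k _) h2 2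
              rwa [Real.sq_sqrt (by positivity)] at h3
            linarith
        _ = Real.sqrt (∑ i : Fin (m + 1), (roConst Φ k (ks i))^2) := by
            rw [Fin.sum_univ_succ]

end RoAux

theorem roConst_sum_bound (n p l k : ℕ) (Φ : Matrix (Fin n) (Fin p) ℝ)
    (ks : Fin l → ℕ) (hk : 0 < k) (hks : ∀ i, 0 < ks i)
    (hp : k + ∑ i, ks i ≤ p) :
    roConst Φ k (∑ i, ks i) ≤ Real.sqrt (∑ i, (roConst Φ k (ks i))^2) ∧
      Real.sqrt (∑ i, (roConst Φ k (ks i))^2) ≤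
        Real.sqrt (∑ i, (ripConst Φ (k + ks i))^2) := by
  constructor
  · exact RoAux.roConst_sum_le Φ k l ks
  · apply Real.sqrt_le_sqrt
    apply Finset.sum_le_sum
    intro i _
    exact pow_le_pow_left₀ (RoAux.roConst_nonneg Φ k (ks i))
      (RoAux.roConst_le_ripConst Φ k (ks i)) 2
end

section
/- Sharpness of RIP conditions: for every positive integer k there exists a (2k-1)×2k real matrix Φ whose restricted isometry constant satisfies δ_k(Φ) = (k-1)/(2k-1), together with two nonzero k-sparse vectors β₁, β₂ ∈ ℝ^{2k} with disjoint supports such that Φβ₁ = Φβ₂. -/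
theorem key_id (d : ℕ → ℝ) (m : ℕ) :
    ∑ i ∈ Finset.range m, ((∑ j ∈ Finset.range (i+1), d j) - ((i:ℝ)+1) * d (i+1))^2 / (((i:ℝ)+1)*((i:ℝ)+2)) =
      ∑ j ∈ Finset.range (m+1), (d j)^2 - (∑ j ∈ Finset.range (m+1), d j)^2 / ((m:ℝ)+1) := by
  induction m with
  | zero => simp
  | succ m ih =>
    rw [Finset.sum_range_succ _ m, ih,
        Finset.sum_range_succ (fun j => (d j)^2) (m+1),
        Finset.sum_range_succ d (m+1)]
    set A := ∑ j ∈ Finset.range (m+1), d j with hA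
    set B := ∑ j ∈ Finset.range (m+1), (d j)^2 with hB
    have h1 : ((m:ℝ)+1) ≠ 0 := by positivity
    have h2 : ((m:ℝ)+2) ≠ 0 := by positivity
    push_cast
    field_simp
    ring

noncomputable def aa (i : ℕ) : ℝ := (Real.sqrt (((i:ℝ)+1)*((i:ℝ)+2)))⁻¹

noncomputable def Phi (k : ℕ) : Matrix (Fin (2*k-1)) (Fin (2*k)) ℝ :=
  fun i j => Real.sqrt (2*(k:ℝ)/(2*(k:ℝ)-1)) *
    (if (j:ℕ) ≤ (i:ℕ) then aa i else if (j:ℕ) = (i:ℕ)+1 then -(((i:ℕ):ℝ)+1) * aa i else 0)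

def ext {p : ℕ} (c : Fin p → ℝ) : ℕ → ℝ := fun n => if h : n < p then c ⟨n, h⟩ else 0

lemma sum_ext {p : ℕ} (c : Fin p → ℝ) (f : ℝ → ℝ) (hf : f 0 = 0) :
    ∑ n ∈ Finset.range p, f (ext c n) = ∑ j : Fin p, f (c j) := by
  rw [← Fin.sum_univ_eq_sum_range (fun n => f (ext c n)) p]
  refine Finset.sum_congr rfl (fun j _ => ?_)
  simp [ext, j.isLt]

lemma row_formula (k : ℕ) (hk : 0 < k) (c : Fin (2*k) → ℝ) (i : Fin (2*k-1)) :
    (Phi k).mulVec c i = Real.sqrt (2*(k:ℝ)/(2*(k:ℝ)-1)) * aa i *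
      ((∑ j ∈ Finset.range ((i:ℕ)+1), ext c j) - (((i:ℕ):ℝ)+1) * ext c ((i:ℕ)+1)) := by
  have hi : (i:ℕ) + 1 < 2*k := by omega
  unfold Matrix.mulVec dotProduct
  have step1 : ∀ j : Fin (2*k), Phi k i j * c j =
      (fun n => Real.sqrt (2*(k:ℝ)/(2*(k:ℝ)-1)) *
        (if n ≤ (i:ℕ) then aa i else if n = (i:ℕ)+1 then -(((i:ℕ):ℝ)+1) * aa i else 0) * ext c n) (j:ℕ) := by
    intro j
    simp only [Phi, ext, j.isLt, dif_pos, mul_assoc]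
  rw [Finset.sum_congr rfl (fun j _ => step1 j)]
  rw [Fin.sum_univ_eq_sum_range (fun n => Real.sqrt (2*(k:ℝ)/(2*(k:ℝ)-1)) *
        (if n ≤ (i:ℕ) then aa i else if n = (i:ℕ)+1 then -(((i:ℕ):ℝ)+1) * aa i else 0) * ext c n) (2*k)]
  rw [← Finset.sum_subset (Finset.range_subset_range.2 (by omega : (i:ℕ)+2 ≤ 2*k))
      (by intro x hx hx2
          simp only [Finset.mem_range] at hx hx2
          have h1 : ¬ (x ≤ (i:ℕ)) := by omega
          have h2 : ¬ (x = (i:ℕ)+1) := by omega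
          simp [h1, h2])]
  rw [Finset.sum_range_succ]
  have : ∀ n ∈ Finset.range ((i:ℕ)+1),
      Real.sqrt (2*(k:ℝ)/(2*(k:ℝ)-1)) *
        (if n ≤ (i:ℕ) then aa i else if n = (i:ℕ)+1 then -(((i:ℕ):ℝ)+1) * aa i else 0) * ext c n
      = Real.sqrt (2*(k:ℝ)/(2*(k:ℝ)-1)) * aa i * ext c n := by
    intro n hn
    simp only [Finset.mem_range] at hn
    have : n ≤ (i:ℕ) := by omega
    simp [this]
  rw [Finset.sum_congr rfl this]
  have h2 : ¬ ((i:ℕ)+1 ≤ (i:ℕ)) := by omega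
  simp only [h2, if_false, if_true, eq_self_iff_true]
  rw [← Finset.mul_sum]
  ring

lemma quadform (k : ℕ) (hk : 0 < k) (c : Fin (2*k) → ℝ) :
    ∑ i, ((Phi k).mulVec c i)^2 =
      (2*(k:ℝ) * ∑ j, (c j)^2 - (∑ j, c j)^2) / (2*(k:ℝ)-1) := by
  have hk1 : (1:ℝ) ≤ (k:ℝ) := by exact_mod_cast hk
  have hden : (0:ℝ) < 2*(k:ℝ)-1 := by linarith
  have hs : (Real.sqrt (2*(k:ℝ)/(2*(k:ℝ)-1)))^2 = 2*(k:ℝ)/(2*(k:ℝ)-1) :=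
    Real.sq_sqrt (by positivity)
  have ha : ∀ n : ℕ, (aa n)^2 = (((n:ℝ)+1)*((n:ℝ)+2))⁻¹ := by
    intro n
    rw [aa, ← Real.sqrt_inv, Real.sq_sqrt (by positivity)]
  have hrow : ∀ i : Fin (2*k-1), ((Phi k).mulVec c i)^2 =
      (fun n : ℕ => (2*(k:ℝ)/(2*(k:ℝ)-1)) *
        (((∑ j ∈ Finset.range (n+1), ext c j) - ((n:ℝ)+1) * ext c (n+1))^2 /
          (((n:ℝ)+1)*((n:ℝ)+2)))) (i:ℕ) := by
    intro i
    rw [row_formula k hk c i]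
    rw [mul_pow, mul_pow, hs, ha]
    field_simp
  rw [Finset.sum_congr rfl (fun i _ => hrow i),
      Fin.sum_univ_eq_sum_range (fun n : ℕ => (2*(k:ℝ)/(2*(k:ℝ)-1)) *
        (((∑ j ∈ Finset.range (n+1), ext c j) - ((n:ℝ)+1) * ext c (n+1))^2 /
          (((n:ℝ)+1)*((n:ℝ)+2)))) (2*k-1),
      ← Finset.mul_sum, key_id (ext c) (2*k-1)]
  have hm : 2*k-1+1 = 2*k := by omega
  rw [hm]
  have hcast : (((2*k-1:ℕ)):ℝ) + 1 = 2*(k:ℝ) := by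
    have : (1:ℕ) ≤ 2*k := by omega
    push_cast [this]
    ring
  rw [hcast]
  rw [sum_ext c (fun x => x^2) (by norm_num), sum_ext c (fun x => x) rfl]
  have h2k : (2*(k:ℝ)) ≠ 0 := by positivity
  field_simp

lemma sparse_cs {p k : ℕ} (c : Fin p → ℝ) (h : IsSparse k c) :
    (∑ j, c j)^2 ≤ (k:ℝ) * ∑ j, (c j)^2 := by
  set s := Finset.univ.filter (fun i => c i ≠ 0) with hs
  have h1 : ∑ j, c j = ∑ j ∈ s, c j := (Finset.sum_filter_ne_zero _).symm
  have h2 : (∑ j ∈ s, c j)^2 ≤ (s.card : ℝ) * ∑ j ∈ s, (c j)^2 := by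
    have := Finset.sum_mul_sq_le_sq_mul_sq s (fun _ => (1:ℝ)) c
    simpa using this
  have h3 : ∑ j ∈ s, (c j)^2 ≤ ∑ j, (c j)^2 :=
    Finset.sum_le_sum_of_subset_of_nonneg (Finset.filter_subset _ _)
      (fun i _ _ => sq_nonneg _)
  have h4 : (s.card : ℝ) ≤ (k:ℝ) := by exact_mod_cast h
  have hB : (0:ℝ) ≤ ∑ j ∈ s, (c j)^2 := Finset.sum_nonneg fun i _ => sq_nonneg _
  calc (∑ j, c j)^2 = (∑ j ∈ s, c j)^2 := by rw [h1]
    _ ≤ (s.card : ℝ) * ∑ j ∈ s, (c j)^2 := h2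
    _ ≤ (k:ℝ) * ∑ j, (c j)^2 := by
        apply mul_le_mul h4 h3 hB (by positivity)

lemma one_sparse {p : ℕ} (c : Fin p → ℝ) (h : IsSparse 1 c) :
    ∑ j, (c j)^2 ≤ (∑ j, c j)^2 := by
  set s := Finset.univ.filter (fun i => c i ≠ 0) with hs
  have h1 : ∑ j, c j = ∑ j ∈ s, c j := (Finset.sum_filter_ne_zero _).symm
  have h2 : ∑ j, (c j)^2 = ∑ j ∈ s, (c j)^2 := by
    refine (Finset.sum_filter_of_ne ?_).symm
    intro i _ hi
    simp only [hs, ne_eq]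
    intro hc; exact hi (by rw [hc]; ring)
  rw [h1, h2]
  rcases s.eq_empty_or_nonempty with he | hne
  · simp [he]
  · obtain ⟨i₀, hi₀⟩ := Finset.card_eq_one.mp (le_antisymm h (Finset.card_pos.mpr hne))
    have hsi : s = {i₀} := hs.trans hi₀
    rw [hsi]
    simp

lemma card_ge_filter (k : ℕ) :
    (Finset.univ.filter (fun j : Fin (2*k) => ¬ ((j:ℕ) < k))).card = k := by
  rw [Finset.card_filter]
  rw [Fin.sum_univ_eq_sum_range (fun n => if ¬ n < k then 1 else 0) (2*k)]
  rw [← Finset.card_filter]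
  have : (Finset.range (2*k)).filter (fun n => ¬ n < k) = Finset.Ico k (2*k) := by
    ext n; simp only [Finset.mem_filter, Finset.mem_range, Finset.mem_Ico]; omega
  rw [this, Nat.card_Ico]
  omega

lemma card_lt_filter (k : ℕ) :
    (Finset.univ.filter (fun j : Fin (2*k) => (j:ℕ) < k)).card = k := by
  rw [Finset.card_filter]
  rw [Fin.sum_univ_eq_sum_range (fun n => if n < k then 1 else 0) (2*k)]
  have : (Finset.range (2*k)).filter (fun n => n < k) = Finset.range k := by
    ext n; simp only [Finset.mem_filter, Finset.mem_range]; omega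
  rw [← Finset.card_filter, this, Finset.card_range]

theorem rip_sharpness (k : ℕ) (hk : 0 < k) :
    ∃ Φ : Matrix (Fin (2*k - 1)) (Fin (2*k)) ℝ,
      ripConst Φ k = ((k : ℝ) - 1) / (2*(k : ℝ) - 1) ∧
      ∃ β₁ β₂ : Fin (2*k) → ℝ,
        β₁ ≠ 0 ∧ β₂ ≠ 0 ∧ IsSparse k β₁ ∧ IsSparse k β₂ ∧
        (∀ i, β₁ i = 0 ∨ β₂ i = 0) ∧
        Φ.mulVec β₁ = Φ.mulVec β₂ := by
  have hk1 : (1:ℝ) ≤ (k:ℝ) := by exact_mod_cast hk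
  have hden : (0:ℝ) < 2*(k:ℝ)-1 := by linarith
  set δ₀ : ℝ := ((k:ℝ)-1)/(2*(k:ℝ)-1) with hδ₀
  have hδ₀0 : 0 ≤ δ₀ := div_nonneg (by linarith) hden.le
  set S : Set ℝ := {δ : ℝ | 0 ≤ δ ∧ ∀ c : Fin (2*k) → ℝ, IsSparse k c →
    (1 - δ) * ∑ i, (c i)^2 ≤ (∑ i, ((Phi k).mulVec c i)^2) ∧
    (∑ i, ((Phi k).mulVec c i)^2) ≤ (1 + δ) * ∑ i, (c i)^2} with hS
  have hmem : δ₀ ∈ S := by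
    refine ⟨hδ₀0, fun c hc => ?_⟩
    have hq := quadform k hk c
    set A := ∑ j, c j with hA
    set B := ∑ j, (c j)^2 with hB
    have hcs : A^2 ≤ (k:ℝ) * B := sparse_cs c hc
    have hBnn : (0:ℝ) ≤ B := Finset.sum_nonneg fun i _ => sq_nonneg _
    have e1 : (1-δ₀)*(2*(k:ℝ)-1) = (k:ℝ) := by
      rw [hδ₀, sub_mul, div_mul_cancel₀ _ hden.ne']; ring
    have e2 : (1+δ₀)*(2*(k:ℝ)-1) = 3*(k:ℝ)-2 := by
      rw [hδ₀, add_mul, div_mul_cancel₀ _ hden.ne']; ring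
    constructor
    · rw [hq, le_div_iff₀ hden]
      calc (1-δ₀) * B * (2*(k:ℝ)-1) = ((1-δ₀)*(2*(k:ℝ)-1)) * B := by ring
        _ = (k:ℝ) * B := by rw [e1]
        _ ≤ 2*(k:ℝ)*B - A^2 := by nlinarith [hcs]
    · rw [hq, div_le_iff₀ hden]
      have key : (2 - (k:ℝ)) * B ≤ A^2 := by
        rcases Nat.lt_or_ge k 2 with h2 | h2
        · have hk1' : k = 1 := by omega
          subst hk1'
          have := one_sparse c hc
          push_cast
          linarith
        · have : (2:ℝ) ≤ (k:ℝ) := by exact_mod_cast h2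
          nlinarith [sq_nonneg A]
      calc 2*(k:ℝ)*B - A^2 ≤ (3*(k:ℝ)-2) * B := by nlinarith [key]
        _ = ((1+δ₀)*(2*(k:ℝ)-1)) * B := by rw [e2]
        _ = (1+δ₀) * B * (2*(k:ℝ)-1) := by ring
  have hlb : ∀ δ ∈ S, δ₀ ≤ δ := by
    intro δ hδ
    obtain ⟨hδnn, hδ2⟩ := hδ
    set c : Fin (2*k) → ℝ := fun j => if (j:ℕ) < k then 1 else 0 with hc
    have hfil : Finset.univ.filter (fun i => c i ≠ 0) =
        Finset.univ.filter (fun j : Fin (2*k) => (j:ℕ) < k) := by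
      ext i
      simp only [Finset.mem_filter, Finset.mem_univ, true_and, hc]
      constructor
      · intro h; by_contra h2; simp [h2] at h
      · intro h; simp [h]
    have hsp : IsSparse k c := by
      unfold IsSparse
      rw [hfil, card_lt_filter]
    have hA : ∑ j, c j = (k:ℝ) := by
      rw [hc]
      rw [Finset.sum_boole]
      rw [card_lt_filter k]
    have hB : ∑ j, (c j)^2 = (k:ℝ) := by
      have : ∀ j : Fin (2*k), (c j)^2 = c j := by
        intro j; by_cases h : (j:ℕ) < k <;> simp [hc, h]
      rw [Finset.sum_congr rfl (fun j _ => this j), hA]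
    have hl := (hδ2 c hsp).1
    rw [quadform k hk c, hA, hB, le_div_iff₀ hden] at hl
    rw [hδ₀, div_le_iff₀ hden]
    nlinarith [hl]
  refine ⟨Phi k, ?_, ?_⟩
  · show sInf S = δ₀
    exact le_antisymm (csInf_le ⟨δ₀, hlb⟩ hmem) (le_csInf ⟨δ₀, hmem⟩ hlb)
  · refine ⟨fun j => if (j:ℕ) < k then 1 else 0,
           fun j => if (j:ℕ) < k then 0 else -1, ?_, ?_, ?_, ?_, ?_, ?_⟩
    · intro h
      have := congrFun h ⟨0, by omega⟩
      simp [hk] at this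
    · intro h
      have := congrFun h ⟨2*k-1, by omega⟩
      have h2 : ¬ ((⟨2*k-1, by omega⟩ : Fin (2*k)) : ℕ) < k := by
        show ¬ (2*k-1 < k); omega
      simp [h2] at this
    · unfold IsSparse
      have : Finset.univ.filter (fun i : Fin (2*k) => (if (i:ℕ) < k then (1:ℝ) else 0) ≠ 0) =
          Finset.univ.filter (fun j : Fin (2*k) => (j:ℕ) < k) := by
        ext i
        simp only [Finset.mem_filter, Finset.mem_univ, true_and]
        constructor
        · intro h; by_contra h2; simp [h2] at h
        · intro h; simp [h]
      rw [this, card_lt_filter]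
    · unfold IsSparse
      have heq : Finset.univ.filter (fun i : Fin (2*k) => (if (i:ℕ) < k then (0:ℝ) else -1) ≠ 0) =
          Finset.univ.filter (fun j : Fin (2*k) => ¬ ((j:ℕ) < k)) := by
        ext i
        simp only [Finset.mem_filter, Finset.mem_univ, true_and]
        constructor
        · intro h h2; simp [h2] at h
        · intro h; simp [h]
      rw [heq, card_ge_filter]
    · intro i
      by_cases h : (i:ℕ) < k
      · right; simp [h]
      · left; simp [h]
    · set β₁ : Fin (2*k) → ℝ := fun j => if (j:ℕ) < k then 1 else 0 with hβ₁
      set β₂ : Fin (2*k) → ℝ := fun j => if (j:ℕ) < k then 0 else -1 with hβ₂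
      have hone : ∀ j : Fin (2*k), (β₁ - β₂) j = 1 := by
        intro j
        by_cases h : (j:ℕ) < k <;> simp [hβ₁, hβ₂, h]
      have hsum1 : ∑ j, (β₁ - β₂) j = 2*(k:ℝ) := by
        rw [Finset.sum_congr rfl (fun j _ => hone j)]
        simp [Finset.card_univ]
      have hsum2 : ∑ j, ((β₁ - β₂) j)^2 = 2*(k:ℝ) := by
        rw [Finset.sum_congr rfl (fun j _ => by rw [hone j, one_pow] :
              ∀ j ∈ Finset.univ, ((β₁ - β₂) j)^2 = 1)]
        simp [Finset.card_univ]
      have hzero : ∑ i, ((Phi k).mulVec (β₁ - β₂) i)^2 = 0 := by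
        rw [quadform k hk (β₁ - β₂), hsum1, hsum2,
            show (2*(k:ℝ) * (2*(k:ℝ)) - (2*(k:ℝ))^2) = 0 from by ring, zero_div]
      have hz : ∀ i, (Phi k).mulVec (β₁ - β₂) i = 0 := by
        intro i
        have := (Finset.sum_eq_zero_iff_of_nonneg (fun i _ => sq_nonneg ((Phi k).mulVec (β₁ - β₂) i))).mp hzero i (Finset.mem_univ i)
        exact pow_eq_zero_iff (by norm_num) |>.mp this
      funext i
      have hsub := Matrix.mulVec_sub (Phi k) β₁ β₂
      have : (Phi k).mulVec β₁ i - (Phi k).mulVec β₂ i = 0 := by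
        rw [← Pi.sub_apply ((Phi k).mulVec β₁) ((Phi k).mulVec β₂) i, ← hsub]
        exact hz i
      linarith [this]
end
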